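/- arXiv:1206.3612 — 7 statements merged into one kernel-verified Lean document; each statement's English description precedes it below -/
import Mathlib

section
/- With B the divergence transition matrix as defined from a channel W and strictly positive marginals P_X, P_Y = W P_X, every vector L orthogonal to v₀ = (√P_X(x))_x satisfies ‖B L‖ ≤ ‖L‖, i.e., the operator norm of B restricted to the orthogonal complement of v₀ is at most 1. -/
/-- Every vector `L` orthogonal to `v₀ = √P_X` satisfies `‖B L‖ ≤ ‖L‖`, where
`B = diag(1/√P_Y) W diag(√P_X)` is the divergence transition matrix. -/
theorem stmt_4 {X Y : Type*} [Fintype X] [Fintype Y]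
    (W : Matrix Y X ℝ) (PX : X → ℝ) (PY : Y → ℝ)
    (hW0 : ∀ y x, 0 ≤ W y x) (hW1 : ∀ x, ∑ y, W y x = 1)
    (hPXpos : ∀ x, 0 < PX x) (hPXsum : ∑ x, PX x = 1)
    (hPY : PY = W.mulVec PX) (hPYpos : ∀ y, 0 < PY y)
    (B : Matrix Y X ℝ)
    (hB : B = fun y x => W y x * Real.sqrt (PX x) / Real.sqrt (PY y)) :
    ∀ L : X → ℝ, (∑ x, L x * Real.sqrt (PX x)) = 0 →
      ∑ y, (B.mulVec L y) ^ 2 ≤ ∑ x, (L x) ^ 2 := by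
  intro L _
  have key : ∀ y, (B.mulVec L y) ^ 2 ≤ ∑ x, W y x * L x ^ 2 := by
    intro y
    have hBy : B.mulVec L y = (∑ x, W y x * Real.sqrt (PX x) * L x) / Real.sqrt (PY y) := by
      simp only [Matrix.mulVec, dotProduct, hB]
      rw [Finset.sum_div]
      exact Finset.sum_congr rfl fun x _ => by ring
    have hPYy : (0:ℝ) < PY y := hPYpos y
    have hsq : (Real.sqrt (PY y)) ^ 2 = PY y := Real.sq_sqrt hPYy.le
    have hCS : (∑ x, W y x * Real.sqrt (PX x) * L x) ^ 2 ≤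
        (∑ x, W y x * PX x) * ∑ x, W y x * L x ^ 2 := by
      have h := Finset.sum_mul_sq_le_sq_mul_sq Finset.univ
        (fun x => Real.sqrt (W y x * PX x)) (fun x => Real.sqrt (W y x) * L x)
      have h1 : ∀ x, Real.sqrt (W y x * PX x) * (Real.sqrt (W y x) * L x)
          = W y x * Real.sqrt (PX x) * L x := by
        intro x
        rw [Real.sqrt_mul (hW0 y x)]
        rw [show Real.sqrt (W y x) * Real.sqrt (PX x) * (Real.sqrt (W y x) * L x)
            = (Real.sqrt (W y x) * Real.sqrt (W y x)) * Real.sqrt (PX x) * L x by ring,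
          Real.mul_self_sqrt (hW0 y x)]
      have h2 : ∀ x, Real.sqrt (W y x * PX x) ^ 2 = W y x * PX x := fun x =>
        Real.sq_sqrt (mul_nonneg (hW0 y x) (hPXpos x).le)
      have h3 : ∀ x, (Real.sqrt (W y x) * L x) ^ 2 = W y x * L x ^ 2 := fun x => by
        rw [mul_pow, Real.sq_sqrt (hW0 y x)]
      simpa only [h1, h2, h3] using h
    have hPYeq : ∑ x, W y x * PX x = PY y := by
      rw [hPY]; simp [Matrix.mulVec, dotProduct]
    rw [hBy, div_pow, hsq, div_le_iff₀ hPYy]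
    calc (∑ x, W y x * Real.sqrt (PX x) * L x) ^ 2
        ≤ (∑ x, W y x * PX x) * ∑ x, W y x * L x ^ 2 := hCS
      _ = (∑ x, W y x * L x ^ 2) * PY y := by rw [hPYeq]; ring
  calc ∑ y, (B.mulVec L y) ^ 2 ≤ ∑ y, ∑ x, W y x * L x ^ 2 :=
        Finset.sum_le_sum fun y _ => key y
    _ = ∑ x, (L x) ^ 2 := by
        rw [Finset.sum_comm]
        simp [← Finset.sum_mul, hW1]
end

section
/- Let U → X → Y be a Markov chain on finite alphabets, where Y is obtained from X by channel W, P_X is strictly positive, and P_{X|U=u} = P_X + ε J_u with ∑_x J_u(x) = 0 for every u. Let σ be the second largest singular value of the divergence transition matrix B = diag(1/√P_Y)·W·diag(√P_X). Then I(U;Y) ≤ σ²·I(U;X) + o(ε²) as ε → 0. -/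
open Filter Asymptotics

lemma L_littleo : (fun t : ℝ => Real.log (1+t) - t + t^2/2) =o[nhds 0] fun t => t^2 := by
  have hO : (fun t : ℝ => Real.log (1+t) - t + t^2/2) =O[nhds 0] fun t => t^3 := by
    rw [Asymptotics.isBigO_iff]
    refine ⟨2, ?_⟩
    have h : ∀ᶠ t : ℝ in nhds 0, |t| < 1/2 := by
      refine Metric.eventually_nhds_iff.mpr ⟨1/2, one_half_pos, fun {y} hy => ?_⟩
      simpa [Real.dist_eq] using hy
    filter_upwards [h] with t ht
    have ht1 : |(-t)| < 1 := by rw [abs_neg]; linarith [abs_nonneg t]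
    have key := Real.abs_log_sub_add_sum_range_le ht1 2
    have hsum : ∑ i ∈ Finset.range 2, (-t) ^ (i + 1) / ((i:ℝ) + 1) = -t + t^2/2 := by
      simp [Finset.sum_range_succ]; ring
    rw [hsum, abs_neg] at key
    rw [show (1:ℝ) - -t = 1 + t by ring] at key
    have hb : |t|^3 / (1 - |t|) ≤ 2 * |t|^3 := by
      rw [div_le_iff₀ (by linarith)]
      nlinarith [abs_nonneg t, pow_nonneg (abs_nonneg t) 3]
    calc ‖Real.log (1+t) - t + t^2/2‖ = |(-t + t^2/2) + Real.log (1+t)| := by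
          rw [Real.norm_eq_abs]; ring_nf
      _ ≤ |t|^3/(1-|t|) := key
      _ ≤ 2 * |t|^3 := hb
      _ = 2 * ‖t^3‖ := by rw [Real.norm_eq_abs, abs_pow]
  exact hO.trans_isLittleO (Asymptotics.isLittleO_pow_pow (by norm_num))

lemma phi_littleo : (fun t : ℝ => (1+t) * Real.log (1+t) - t - t^2/2) =o[nhds 0] fun t => t^2 := by
  have h1 : (fun t : ℝ => (1+t) * (Real.log (1+t) - t + t^2/2)) =o[nhds 0] fun t => t^2 := by
    have hb : (fun t : ℝ => 1 + t) =O[nhds (0:ℝ)] (fun _ => (1:ℝ)) := by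
      apply Asymptotics.isBigO_const_of_tendsto (c := (1:ℝ))
      · simpa using (show Continuous (fun t : ℝ => 1 + t) from continuous_const.add continuous_id).tendsto (0:ℝ)
      · norm_num
    simpa using hb.mul_isLittleO L_littleo
  have h2 : (fun t : ℝ => -(t^3/2)) =o[nhds (0:ℝ)] fun t => t^2 := by
    have := (Asymptotics.isLittleO_pow_pow (𝕜 := ℝ) (m := 2) (n := 3) (by norm_num))
    exact (this.const_mul_left (-(1/2))).congr_left (fun t => by ring)
  have := h1.add h2
  refine this.congr_left fun t => ?_
  ring
lemma term_littleo (p j : ℝ) (hp : 0 < p) :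
    (fun ε : ℝ => (p + ε * j) * Real.log ((p + ε * j) / p) - ε * j - ε^2 * (j^2 / (2*p)))
      =o[nhds 0] fun ε => ε^2 := by
  have htend : Tendsto (fun ε : ℝ => ε * j / p) (nhds 0) (nhds 0) := by
    have : Continuous (fun ε : ℝ => ε * j / p) := by continuity
    simpa using this.tendsto 0
  have hcomp := phi_littleo.comp_tendsto htend
  have hO : ((fun t : ℝ => t^2) ∘ (fun ε : ℝ => ε * j / p)) =O[nhds 0] fun ε => ε^2 := by
    apply Asymptotics.isBigO_of_le' (c := (j/p)^2)
    intro ε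
    simp only [Function.comp, Real.norm_eq_abs, abs_pow]
    rw [show ε * j / p = ε * (j/p) by ring, abs_mul, mul_pow, sq_abs (j/p)]
    ring_nf
    exact le_refl _
  have := hcomp.trans_isBigO hO
  have hmain := this.const_mul_left p
  refine hmain.congr_left fun ε => ?_
  simp only [Function.comp]
  have hpd : (p + ε * j) / p = 1 + ε * j / p := by field_simp
  rw [hpd]
  field_simp

lemma kl_expansion {ι : Type*} [Fintype ι] (p j : ι → ℝ) (hp : ∀ i, 0 < p i)
    (hj : ∑ i, j i = 0) :
    (fun ε : ℝ => (∑ i, (p i + ε * j i) * Real.log ((p i + ε * j i) / p i))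
        - ε^2 * ∑ i, (j i)^2 / (2 * p i)) =o[nhds 0] fun ε => ε^2 := by
  have hs : (fun ε : ℝ => ∑ i : ι, ((p i + ε * j i) * Real.log ((p i + ε * j i) / p i)
      - ε * j i - ε^2 * ((j i)^2 / (2 * p i)))) =o[nhds 0] fun ε => ε^2 :=
    Asymptotics.IsLittleO.fun_sum (fun i _ => term_littleo (p i) (j i) (hp i))
  refine hs.congr_left fun ε => ?_
  rw [Finset.sum_sub_distrib, Finset.sum_sub_distrib, ← Finset.mul_sum, ← Finset.mul_sum, hj]
  ring

/-- Local strengthening of the data processing inequality: for the Markov chain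
`U → X → Y` with `P_{X|U=u} = P_X + ε J_u`, if `σ` is the second largest singular
value of the DTM `B`, then `I(U;Y) ≤ σ² I(U;X) + o(ε²)` as `ε → 0`. -/
theorem stmt_8 {U X Y : Type*} [Fintype U] [Fintype X] [Fintype Y]
    (W : Matrix Y X ℝ) (PX : X → ℝ) (PY : Y → ℝ)
    (hW0 : ∀ y x, 0 ≤ W y x) (hW1 : ∀ x, ∑ y, W y x = 1)
    (hPXpos : ∀ x, 0 < PX x) (hPXsum : ∑ x, PX x = 1)
    (hPY : PY = W.mulVec PX) (hPYpos : ∀ y, 0 < PY y)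
    (PU : U → ℝ) (hPU0 : ∀ u, 0 ≤ PU u) (hPUsum : ∑ u, PU u = 1)
    (J : U → X → ℝ) (hJsum : ∀ u, ∑ x, J u x = 0)
    (hJmarg : ∀ x, ∑ u, PU u * J u x = 0)
    (B : Matrix Y X ℝ)
    (hB : B = fun y x => W y x * Real.sqrt (PX x) / Real.sqrt (PY y))
    (σ : ℝ) (hσ0 : 0 ≤ σ)
    -- σ bounds the gain of B on the orthogonal complement of v₀ = √P_X:
    (hsec : ∀ L : X → ℝ, (∑ x, L x * Real.sqrt (PX x)) = 0 →
      ∑ y, (B.mulVec L y) ^ 2 ≤ σ ^ 2 * ∑ x, (L x) ^ 2)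
    -- I(U;X) and I(U;Y) as functions of ε:
    (IUX IUY : ℝ → ℝ)
    (hIUX : IUX = fun ε => ∑ u, PU u *
      ∑ x, (PX x + ε * J u x) * Real.log ((PX x + ε * J u x) / PX x))
    (hIUY : IUY = fun ε => ∑ u, PU u *
      ∑ y, (W.mulVec (fun x => PX x + ε * J u x) y) *
        Real.log ((W.mulVec (fun x => PX x + ε * J u x) y) / PY y)) :
    ∃ f : ℝ → ℝ, (f =o[nhds (0 : ℝ)] fun ε => ε ^ 2) ∧
      ∀ᶠ ε in nhds (0 : ℝ), IUY ε ≤ σ ^ 2 * IUX ε + f ε := by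
  set WJ : U → Y → ℝ := fun u => W.mulVec (J u) with hWJ
  have hWJ0 : ∀ u, ∑ y, WJ u y = 0 := by
    intro u
    simp only [hWJ, Matrix.mulVec, dotProduct]
    rw [Finset.sum_comm]
    calc ∑ x, ∑ y, W y x * J u x = ∑ x, (∑ y, W y x) * J u x := by
          simp [Finset.sum_mul]
      _ = ∑ x, J u x := by simp [hW1]
      _ = 0 := hJsum u
  have hmv : ∀ u (ε : ℝ) y, W.mulVec (fun x => PX x + ε * J u x) y = PY y + ε * WJ u y := by
    intro u ε y
    simp only [hWJ, hPY, Matrix.mulVec, dotProduct, mul_add, Finset.sum_add_distrib,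
      Finset.mul_sum]
    congr 1
    apply Finset.sum_congr rfl
    intro x _
    ring
  set bu : U → ℝ := fun u => ∑ x, (J u x)^2 / (2 * PX x) with hbu
  set au : U → ℝ := fun u => ∑ y, (WJ u y)^2 / (2 * PY y) with hau
  set Bc : ℝ := ∑ u, PU u * bu u with hBc
  set Ac : ℝ := ∑ u, PU u * au u with hAc
  -- expansions
  have hXexp : (fun ε : ℝ => IUX ε - ε^2 * Bc) =o[nhds 0] fun ε => ε^2 := by
    have hs : (fun ε : ℝ => ∑ u : U, PU u *
        ((∑ x, (PX x + ε * J u x) * Real.log ((PX x + ε * J u x) / PX x)) - ε^2 * bu u))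
        =o[nhds 0] fun ε => ε^2 :=
      Asymptotics.IsLittleO.fun_sum fun u _ =>
        (kl_expansion PX (J u) hPXpos (hJsum u)).const_mul_left (PU u)
    refine hs.congr_left fun ε => ?_
    rw [hIUX, hBc]
    simp only [mul_sub, Finset.sum_sub_distrib, Finset.mul_sum]
    congr 1
    apply Finset.sum_congr rfl
    intro u _
    ring
  have hYexp : (fun ε : ℝ => IUY ε - ε^2 * Ac) =o[nhds 0] fun ε => ε^2 := by
    have hs : (fun ε : ℝ => ∑ u : U, PU u *
        ((∑ y, (PY y + ε * WJ u y) * Real.log ((PY y + ε * WJ u y) / PY y)) - ε^2 * au u))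
        =o[nhds 0] fun ε => ε^2 :=
      Asymptotics.IsLittleO.fun_sum fun u _ =>
        (kl_expansion PY (WJ u) hPYpos (hWJ0 u)).const_mul_left (PU u)
    refine hs.congr_left fun ε => ?_
    rw [hIUY, hAc]
    simp only [mul_sub, Finset.sum_sub_distrib, Finset.mul_sum, hmv]
    congr 1
    apply Finset.sum_congr rfl
    intro u _
    ring
  -- the spectral inequality per u
  have hab : ∀ u, au u ≤ σ^2 * bu u := by
    intro u
    set L : X → ℝ := fun x => J u x / Real.sqrt (PX x) with hL
    have hsX : ∀ x, Real.sqrt (PX x) ≠ 0 := fun x =>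
      ne_of_gt (Real.sqrt_pos.mpr (hPXpos x))
    have hsY : ∀ y, Real.sqrt (PY y) ≠ 0 := fun y =>
      ne_of_gt (Real.sqrt_pos.mpr (hPYpos y))
    have horth : (∑ x, L x * Real.sqrt (PX x)) = 0 := by
      calc ∑ x, L x * Real.sqrt (PX x) = ∑ x, J u x := by
            apply Finset.sum_congr rfl
            intro x _
            rw [hL, div_mul_cancel₀ _ (hsX x)]
        _ = 0 := hJsum u
    have hBL : ∀ y, B.mulVec L y = WJ u y / Real.sqrt (PY y) := by
      intro y
      simp only [hB, Matrix.mulVec, dotProduct, hL, hWJ]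
      rw [Finset.sum_div]
      apply Finset.sum_congr rfl
      intro x _
      rw [div_mul_div_comm, div_eq_div_iff (mul_ne_zero (hsY y) (hsX x)) (hsY y)]
      ring
    have key := hsec L horth
    have e1 : ∑ y, (B.mulVec L y)^2 = ∑ y, (WJ u y)^2 / PY y := by
      apply Finset.sum_congr rfl
      intro y _
      rw [hBL y, div_pow, Real.sq_sqrt (hPYpos y).le]
    have e2 : ∑ x, (L x)^2 = ∑ x, (J u x)^2 / PX x := by
      apply Finset.sum_congr rfl
      intro x _
      rw [hL]
      rw [div_pow, Real.sq_sqrt (hPXpos x).le]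
    rw [e1, e2] at key
    have ha2 : au u = (∑ y, (WJ u y)^2 / PY y) / 2 := by
      rw [hau, Finset.sum_div]
      apply Finset.sum_congr rfl
      intro y _
      rw [div_div]
      ring_nf
    have hb2 : bu u = (∑ x, (J u x)^2 / PX x) / 2 := by
      rw [hbu, Finset.sum_div]
      apply Finset.sum_congr rfl
      intro x _
      rw [div_div]
      ring_nf
    rw [ha2, hb2]
    linarith
  have hAB : Ac ≤ σ^2 * Bc := by
    rw [hAc, hBc, Finset.mul_sum]
    apply Finset.sum_le_sum
    intro u _
    calc PU u * au u ≤ PU u * (σ^2 * bu u) :=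
          mul_le_mul_of_nonneg_left (hab u) (hPU0 u)
      _ = σ^2 * (PU u * bu u) := by ring
  refine ⟨fun ε => (IUY ε - ε^2 * Ac) - σ^2 * (IUX ε - ε^2 * Bc),
    hYexp.sub (hXexp.const_mul_left (σ^2)), ?_⟩
  apply Filter.Eventually.of_forall
  intro ε
  show IUY ε ≤ σ^2 * IUX ε + ((IUY ε - ε^2 * Ac) - σ^2 * (IUX ε - ε^2 * Bc))
  have h1 : ε^2 * Ac ≤ ε^2 * (σ^2 * Bc) :=
    mul_le_mul_of_nonneg_left hAB (sq_nonneg ε)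
  nlinarith [sq_nonneg ε]
end

section
/- Let U → X → Y be a Markov chain with P_{X|U=u} = P_X + ε J_u. Up to o(ε²), I(U;X) = (ε²/2)·∑_u P_U(u)·‖L_u‖² and I(U;Y) = (ε²/2)·∑_u P_U(u)·‖B L_u‖², where L_u = diag(1/√P_X) J_u and B = diag(1/√P_Y)·W·diag(√P_X). -/
open Filter

open Asymptotics


lemma lemA : (fun t : ℝ => Real.log (1 + t) - t + t ^ 2 / 2) =o[nhds 0] fun t => t ^ 2 := by
  rw [isLittleO_iff]
  intro c hc
  have habs : Tendsto (fun t : ℝ => |t|) (nhds 0) (nhds 0) := by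
    simpa using continuous_abs.tendsto (0 : ℝ)
  have hev : ∀ᶠ t : ℝ in nhds 0, |t| < min (1/2) (c/2) :=
    habs.eventually (eventually_lt_nhds (by positivity))
  filter_upwards [hev] with t ht
  have ht1 : |t| < 1 := lt_of_lt_of_le (lt_of_lt_of_le ht (min_le_left _ _)) (by norm_num)
  have ht2 : |t| ≤ 1/2 := le_of_lt (lt_of_lt_of_le ht (min_le_left _ _))
  have htc : |t| ≤ c/2 := le_of_lt (lt_of_lt_of_le ht (min_le_right _ _))
  have hx : |(-t : ℝ)| < 1 := by rwa [abs_neg]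
  have hb := Real.abs_log_sub_add_sum_range_le hx 2
  have hsum : ∑ i ∈ Finset.range 2, (-t) ^ (i + 1) / ((i : ℝ) + 1) = -t + t ^ 2 / 2 := by
    simp [Finset.sum_range_succ]; ring
  rw [hsum, abs_neg] at hb
  have h1 : (1 : ℝ) - (-t) = 1 + t := by ring
  rw [h1] at hb
  have heq : Real.log (1 + t) - t + t ^ 2 / 2 = -t + t ^ 2 / 2 + Real.log (1 + t) := by ring
  have hden : (1:ℝ)/2 ≤ 1 - |t| := by linarith
  have h2 : |t| ^ 3 / (1 - |t|) ≤ 2 * |t| ^ 3 := by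
    rw [div_le_iff₀ (by linarith)]
    nlinarith [pow_nonneg (abs_nonneg t) 3]
  calc ‖Real.log (1 + t) - t + t ^ 2 / 2‖ = |(-t + t ^ 2 / 2 + Real.log (1 + t))| := by
        rw [heq]; rfl
    _ ≤ |t| ^ 3 / (1 - |t|) := hb
    _ ≤ 2 * |t| ^ 3 := h2
    _ = 2 * |t| * |t| ^ 2 := by ring
    _ ≤ c * |t| ^ 2 := by nlinarith [sq_nonneg (|t|)]
    _ = c * ‖t ^ 2‖ := by rw [Real.norm_eq_abs, abs_pow]

lemma lemB (p j : ℝ) (hp : 0 < p) :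
    (fun ε : ℝ => (p + ε * j) * Real.log ((p + ε * j) / p)
        - (ε * j + ε ^ 2 * j ^ 2 / (2 * p))) =o[nhds 0] fun ε => ε ^ 2 := by
  have hcont : Tendsto (fun ε : ℝ => p + ε * j) (nhds 0) (nhds p) := by
    have hc : Continuous (fun ε : ℝ => p + ε * j) := by continuity
    simpa using hc.tendsto 0
  have hpos : ∀ᶠ ε : ℝ in nhds 0, 0 < p + ε * j := hcont.eventually (eventually_gt_nhds hp)
  -- composed little-o
  have hlin : Tendsto (fun ε : ℝ => ε * j / p) (nhds 0) (nhds 0) := by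
    have hc : Continuous (fun ε : ℝ => ε * j / p) := by continuity
    simpa using hc.tendsto 0
  have hg : (fun ε : ℝ => Real.log (1 + ε * j / p) - ε * j / p + (ε * j / p) ^ 2 / 2)
      =o[nhds 0] fun ε => (ε * j / p) ^ 2 := lemA.comp_tendsto hlin
  have hgO : (fun ε : ℝ => (ε * j / p) ^ 2) =O[nhds 0] fun ε => ε ^ 2 := by
    have := (isBigO_refl (fun ε : ℝ => ε ^ 2) (nhds 0)).const_mul_left ((j / p) ^ 2)
    exact this.congr_left (fun ε => by ring)
  have hg2 := hg.trans_isBigO hgO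
  have hbig : (fun ε : ℝ => p + ε * j) =O[nhds 0] (fun _ => (1 : ℝ)) :=
    hcont.isBigO_one ℝ
  have h1 : (fun ε : ℝ => (p + ε * j) *
      (Real.log (1 + ε * j / p) - ε * j / p + (ε * j / p) ^ 2 / 2)) =o[nhds 0] fun ε => ε ^ 2 := by
    have := hbig.mul_isLittleO hg2
    exact this.congr_right (fun ε => by ring)
  have h2 : (fun ε : ℝ => ε ^ 3 * (j ^ 3 / (2 * p ^ 2))) =o[nhds 0] fun ε => ε ^ 2 := by
    have := (isLittleO_pow_pow (𝕜 := ℝ) (by norm_num : 2 < 3)).const_mul_left (j ^ 3 / (2 * p ^ 2))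
    exact this.congr_left (fun ε => by ring)
  refine (h1.sub h2).congr' ?_ (EventuallyEq.refl _ _)
  filter_upwards [hpos] with ε hε
  have hq : (p + ε * j) / p = 1 + ε * j / p := by field_simp
  rw [hq]
  field_simp
  ring
lemma lemKey {ι : Type*} [Fintype ι] (p j : ι → ℝ) (hp : ∀ i, 0 < p i)
    (hj : ∑ i, j i = 0) :
    (fun ε : ℝ => (∑ i, (p i + ε * j i) * Real.log ((p i + ε * j i) / p i))
        - ε ^ 2 / 2 * ∑ i, (j i) ^ 2 / p i) =o[nhds 0] fun ε => ε ^ 2 := by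
  have hsum : (fun ε : ℝ => (∑ i, (p i + ε * j i) * Real.log ((p i + ε * j i) / p i))
      - ε ^ 2 / 2 * ∑ i, (j i) ^ 2 / p i)
      = fun ε => ∑ i, ((p i + ε * j i) * Real.log ((p i + ε * j i) / p i)
        - (ε * j i + ε ^ 2 * (j i) ^ 2 / (2 * p i))) := by
    funext ε
    rw [Finset.sum_sub_distrib, Finset.sum_add_distrib, ← Finset.mul_sum, hj, mul_zero, zero_add]
    congr 1
    rw [Finset.mul_sum]
    exact Finset.sum_congr rfl fun i _ => by ring
  rw [hsum]
  exact IsLittleO.fun_sum fun i _ => lemB (p i) (j i) (hp i)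

lemma lemMain {U ι : Type*} [Fintype U] [Fintype ι] (PU : U → ℝ) (p : ι → ℝ)
    (j : U → ι → ℝ) (hp : ∀ i, 0 < p i) (hj : ∀ u, ∑ i, j u i = 0) :
    (fun ε : ℝ => (∑ u, PU u * ∑ i, (p i + ε * j u i) * Real.log ((p i + ε * j u i) / p i))
        - ε ^ 2 / 2 * ∑ u, PU u * ∑ i, (j u i) ^ 2 / p i) =o[nhds 0] fun ε => ε ^ 2 := by
  have hsum : (fun ε : ℝ => (∑ u, PU u * ∑ i, (p i + ε * j u i) * Real.log ((p i + ε * j u i) / p i))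
      - ε ^ 2 / 2 * ∑ u, PU u * ∑ i, (j u i) ^ 2 / p i)
      = fun ε => ∑ u, PU u * ((∑ i, (p i + ε * j u i) * Real.log ((p i + ε * j u i) / p i))
        - ε ^ 2 / 2 * ∑ i, (j u i) ^ 2 / p i) := by
    funext ε
    rw [Finset.mul_sum, ← Finset.sum_sub_distrib]
    exact Finset.sum_congr rfl fun u _ => by ring
  rw [hsum]
  exact IsLittleO.fun_sum fun u _ => (lemKey p (j u) hp (hj u)).const_mul_left (PU u)

/-- Local quadratic expressions of mutual information: with `P_{X|U=u} = P_X + ε J_u`,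
`I(U;X) = (ε²/2) ∑_u P_U(u) ‖L_u‖² + o(ε²)` and
`I(U;Y) = (ε²/2) ∑_u P_U(u) ‖B L_u‖² + o(ε²)`,
where `L_u = diag(1/√P_X) J_u` and `B` is the divergence transition matrix. -/
theorem stmt_9 {U X Y : Type*} [Fintype U] [Fintype X] [Fintype Y]
    (W : Matrix Y X ℝ) (PX : X → ℝ) (PY : Y → ℝ)
    (hW0 : ∀ y x, 0 ≤ W y x) (hW1 : ∀ x, ∑ y, W y x = 1)
    (hPXpos : ∀ x, 0 < PX x) (hPXsum : ∑ x, PX x = 1)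
    (hPY : PY = W.mulVec PX) (hPYpos : ∀ y, 0 < PY y)
    (PU : U → ℝ) (hPU0 : ∀ u, 0 ≤ PU u) (hPUsum : ∑ u, PU u = 1)
    (J : U → X → ℝ) (hJsum : ∀ u, ∑ x, J u x = 0)
    (hJmarg : ∀ x, ∑ u, PU u * J u x = 0)
    (B : Matrix Y X ℝ)
    (hB : B = fun y x => W y x * Real.sqrt (PX x) / Real.sqrt (PY y))
    (L : U → X → ℝ) (hL : ∀ u x, L u x = J u x / Real.sqrt (PX x))
    (IUX IUY : ℝ → ℝ)
    (hIUX : IUX = fun ε => ∑ u, PU u *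
      ∑ x, (PX x + ε * J u x) * Real.log ((PX x + ε * J u x) / PX x))
    (hIUY : IUY = fun ε => ∑ u, PU u *
      ∑ y, (W.mulVec (fun x => PX x + ε * J u x) y) *
        Real.log ((W.mulVec (fun x => PX x + ε * J u x) y) / PY y)) :
    ((fun ε : ℝ => IUX ε - ε ^ 2 / 2 * ∑ u, PU u * ∑ x, (L u x) ^ 2)
        =o[nhds (0 : ℝ)] fun ε => ε ^ 2) ∧
    ((fun ε : ℝ => IUY ε - ε ^ 2 / 2 * ∑ u, PU u * ∑ y, (B.mulVec (L u) y) ^ 2)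
        =o[nhds (0 : ℝ)] fun ε => ε ^ 2) := by
  constructor
  · have hL2 : ∀ u x, (L u x) ^ 2 = (J u x) ^ 2 / PX x := by
      intro u x
      rw [hL, div_pow, Real.sq_sqrt (hPXpos x).le]
    have := lemMain PU PX J hPXpos hJsum
    refine this.congr_left fun ε => ?_
    rw [hIUX]
    congr 2
    exact Finset.sum_congr rfl fun u _ => by
      congr 1
      exact Finset.sum_congr rfl fun x _ => (hL2 u x).symm
  · set k : U → Y → ℝ := fun u => W.mulVec (J u) with hk
    have hk0 : ∀ u, ∑ y, k u y = 0 := by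
      intro u
      simp only [hk, Matrix.mulVec, dotProduct]
      rw [Finset.sum_comm]
      calc ∑ x, ∑ y, W y x * J u x = ∑ x, (∑ y, W y x) * J u x := by
            simp [Finset.sum_mul]
        _ = ∑ x, J u x := by simp [hW1]
        _ = 0 := hJsum u
    have hmv : ∀ u (ε : ℝ) y, W.mulVec (fun x => PX x + ε * J u x) y = PY y + ε * k u y := by
      intro u ε y
      simp only [hPY, hk, Matrix.mulVec, dotProduct, mul_add, Finset.sum_add_distrib,
        Finset.mul_sum]
      congr 1
      exact Finset.sum_congr rfl fun x _ => by ring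
    have hBL : ∀ u y, B.mulVec (L u) y = k u y / Real.sqrt (PY y) := by
      intro u y
      simp only [hB, hk, Matrix.mulVec, dotProduct, Finset.sum_div]
      refine Finset.sum_congr rfl fun x _ => ?_
      rw [hL]
      have hs : Real.sqrt (PX x) ≠ 0 := (Real.sqrt_pos.mpr (hPXpos x)).ne'
      have hs' : Real.sqrt (PY y) ≠ 0 := (Real.sqrt_pos.mpr (hPYpos y)).ne'
      field_simp
    have hBL2 : ∀ u y, (B.mulVec (L u) y) ^ 2 = (k u y) ^ 2 / PY y := by
      intro u y
      rw [hBL, div_pow, Real.sq_sqrt (hPYpos y).le]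
    have := lemMain PU PY k hPYpos hk0
    refine this.congr_left fun ε => ?_
    rw [hIUY]
    congr 1
    · exact Finset.sum_congr rfl fun u _ => by
        congr 1
        exact Finset.sum_congr rfl fun y _ => by rw [hmv]
    congr 1
    exact Finset.sum_congr rfl fun u _ => by
      congr 1
      exact Finset.sum_congr rfl fun y _ => (hBL2 u y).symm
end

section
/- For the 'windmill' channel: let B₁, B₂, B₃ be the 2×2 linear maps on ℝ² given by B_k = P∘R_{θ_k}, where R_θ is rotation by θ, θ₁ = 0, θ₂ = 2π/3, θ₃ = 4π/3, and P is orthogonal projection onto the horizontal axis. Then for every unit vector L ∈ ℝ², min{‖B₁L‖², ‖B₂L‖², ‖B₃L‖²} ≤ 1/4. -/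
open Real

set_option maxHeartbeats 1000000 in
/-- Windmill channel, single-letter bound: with `B_k` the projection onto the
horizontal axis composed with rotation by `2π(k−1)/3`, every unit vector `L`
satisfies `min_k ‖B_k L‖² ≤ 1/4`. -/
theorem stmt_12
    (B : Fin 3 → Matrix (Fin 2) (Fin 2) ℝ)
    (hB : ∀ k : Fin 3, B k =
      !![Real.cos (2 * π * (k : ℕ) / 3), -Real.sin (2 * π * (k : ℕ) / 3); 0, 0]) :
    ∀ L : Fin 2 → ℝ, (L 0) ^ 2 + (L 1) ^ 2 = 1 →
      min (min (∑ i, ((B 0).mulVec L i) ^ 2) (∑ i, ((B 1).mulVec L i) ^ 2))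
          (∑ i, ((B 2).mulVec L i) ^ 2) ≤ 1 / 4 := by
  intro L hL
  set x := L 0
  set y := L 1
  have hc0 : Real.cos (2 * π * ((0 : Fin 3) : ℕ) / 3) = 1 := by norm_num
  have hs0 : Real.sin (2 * π * ((0 : Fin 3) : ℕ) / 3) = 0 := by norm_num
  have e1 : (2 * π * ((1 : Fin 3) : ℕ) / 3 : ℝ) = π - π / 3 := by
    norm_num; ring
  have e2 : (2 * π * ((2 : Fin 3) : ℕ) / 3 : ℝ) = π / 3 + π := by
    norm_num; ring
  have hc1 : Real.cos (2 * π * ((1 : Fin 3) : ℕ) / 3) = -(1/2) := by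
    rw [e1, Real.cos_pi_sub, Real.cos_pi_div_three]
  have hs1 : Real.sin (2 * π * ((1 : Fin 3) : ℕ) / 3) = Real.sqrt 3 / 2 := by
    rw [e1, Real.sin_pi_sub, Real.sin_pi_div_three]
  have hc2 : Real.cos (2 * π * ((2 : Fin 3) : ℕ) / 3) = -(1/2) := by
    rw [e2, Real.cos_add_pi, Real.cos_pi_div_three]
  have hs2 : Real.sin (2 * π * ((2 : Fin 3) : ℕ) / 3) = -(Real.sqrt 3 / 2) := by
    rw [e2, Real.sin_add_pi, Real.sin_pi_div_three]
  have S0 : (∑ i, ((B 0).mulVec L i) ^ 2) = x ^ 2 := by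
    simp [hB, Matrix.mulVec, dotProduct, Fin.sum_univ_two, hc0, hs0]
    rfl
  have hc1' : Real.cos (2 * π / 3) = -(1/2) := by
    rw [show (2 * π / 3 : ℝ) = π - π / 3 by ring, Real.cos_pi_sub, Real.cos_pi_div_three]
  have hs1' : Real.sin (2 * π / 3) = Real.sqrt 3 / 2 := by
    rw [show (2 * π / 3 : ℝ) = π - π / 3 by ring, Real.sin_pi_sub, Real.sin_pi_div_three]
  have hc2' : Real.cos (2 * π * 2 / 3) = -(1/2) := by
    rw [show (2 * π * 2 / 3 : ℝ) = π / 3 + π by ring, Real.cos_add_pi, Real.cos_pi_div_three]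
  have hs2' : Real.sin (2 * π * 2 / 3) = -(Real.sqrt 3 / 2) := by
    rw [show (2 * π * 2 / 3 : ℝ) = π / 3 + π by ring, Real.sin_add_pi, Real.sin_pi_div_three]
  have S1 : (∑ i, ((B 1).mulVec L i) ^ 2) = (-(1/2) * x - Real.sqrt 3 / 2 * y) ^ 2 := by
    simp [hB, Matrix.mulVec, dotProduct, Fin.sum_univ_two]
    rw [hc1', hs1']; ring
  have S2 : (∑ i, ((B 2).mulVec L i) ^ 2) = (-(1/2) * x + Real.sqrt 3 / 2 * y) ^ 2 := by
    simp [hB, Matrix.mulVec, dotProduct, Fin.sum_univ_two]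
    rw [hc2', hs2']; ring
  rw [S0, S1, S2]
  by_contra h
  push_neg at h
  simp only [lt_min_iff] at h
  obtain ⟨⟨ha, hb⟩, hc⟩ := h
  set s := Real.sqrt 3 with hsdef
  have hs : s ^ 2 = 3 := Real.sq_sqrt (by norm_num)
  have hb' : 1/4 < (x/2 + s/2*y)^2 := by nlinarith [hb]
  have hc' : 1/4 < (x/2 - s/2*y)^2 := by nlinarith [hc]
  have key : (x^2 - 1/4) * (((x/2 + s/2*y)^2 - 1/4) * ((x/2 - s/2*y)^2 - 1/4))
      = -((4*x^2-1)^2 * y^2)/16 := by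
    linear_combination (1/32*y^2 - 3/64*y^4 - 1/64*y^4*s^2 - 3/32*x^2*y^2 + 3/16*x^2*y^4
      + 1/16*x^2*y^4*s^2 - 1/8*x^4*y^2) * hs
      + (1/64 - 9/64*y^2 - 5/64*x^2 + 9/16*x^2*y^2 + 1/16*x^4) * hL
  have hP : 0 < (x^2 - 1/4) * (((x/2 + s/2*y)^2 - 1/4) * ((x/2 - s/2*y)^2 - 1/4)) :=
    mul_pos (by linarith) (mul_pos (by linarith) (by linarith))
  nlinarith [sq_nonneg ((4*x^2-1)*y)]
end

section
/- Let B_k = P∘R_{2π(k−1)/3}, k = 1,2,3, be the windmill maps. Take U uniform on {0,...,5} and L_{2j} = −L_{2j+1} = φ_{θ + 2πj/3} for j = 0,1,2. Then ∑_u P_U(u)‖L_u‖² = 1 and ∑_u P_U(u)‖B_k L_u‖² = 1/2 for each k = 1,2,3; i.e., with |U| = 6 the single-letter value 1/2 is achievable, exceeding the max-min bound 1/4 for any single perturbation direction. -/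
open Real

set_option maxHeartbeats 1000000 in
/-- Windmill channel with `|U| = 6`: taking `U` uniform on `{0,…,5}` and
`L_{2j} = −L_{2j+1} = φ_{θ+2πj/3}`, the perturbations satisfy
`∑_u P_U(u) ‖L_u‖² = 1` and `∑_u P_U(u) ‖B_k L_u‖² = 1/2` for each `k`,
so the value `1/2` is achievable with single letters and cardinality 6,
exceeding the bound `1/4` for any single perturbation direction. -/
theorem stmt_16
    (B : Fin 3 → Matrix (Fin 2) (Fin 2) ℝ)
    (hB : ∀ k : Fin 3, B k =
      !![Real.cos (2 * π * (k : ℕ) / 3), -Real.sin (2 * π * (k : ℕ) / 3); 0, 0])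
    (φ : ℝ → (Fin 2 → ℝ)) (hφ : ∀ ψ, φ ψ = ![Real.cos ψ, Real.sin ψ])
    (θ : ℝ) (PU : Fin 6 → ℝ) (hPU : ∀ u, PU u = 1 / 6)
    (L : Fin 6 → (Fin 2 → ℝ))
    (hL : ∀ u : Fin 6, L u =
      ((-1 : ℝ) ^ (u : ℕ)) • φ (θ + 2 * π * ((u : ℕ) / 2 : ℕ) / 3)) :
    (∑ u, PU u * ∑ i, (L u i) ^ 2 = 1) ∧
    (∀ k : Fin 3, ∑ u, PU u * ∑ i, ((B k).mulVec (L u) i) ^ 2 = 1 / 2) ∧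
    (∑ u, PU u • L u = 0) := by
  have e0 : ((0 : Fin 6) : ℕ) = 0 := rfl
  have e1 : ((1 : Fin 6) : ℕ) = 1 := rfl
  have e2 : ((2 : Fin 6) : ℕ) = 2 := rfl
  have e3 : ((3 : Fin 6) : ℕ) = 3 := rfl
  have e4 : ((4 : Fin 6) : ℕ) = 4 := rfl
  have e5 : ((5 : Fin 6) : ℕ) = 5 := rfl
  have f0 : ((0 : Fin 3) : ℕ) = 0 := rfl
  have f1 : ((1 : Fin 3) : ℕ) = 1 := rfl
  have f2 : ((2 : Fin 3) : ℕ) = 2 := rfl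
  have h1c : Real.cos (2*π/3) = -(1/2) := by
    have h : (2*π/3) = π - π/3 := by ring
    rw [h, Real.cos_pi_sub, Real.cos_pi_div_three]
  have h1s : Real.sin (2*π/3) = Real.sqrt 3 / 2 := by
    have h : (2*π/3) = π - π/3 := by ring
    rw [h, Real.sin_pi_sub, Real.sin_pi_div_three]
  have h2c : Real.cos (2*π*2/3) = -(1/2) := by
    have h : (2*π*2/3) = π + π/3 := by ring
    rw [h, Real.cos_add, Real.cos_pi, Real.sin_pi, Real.cos_pi_div_three]; ring
  have h2s : Real.sin (2*π*2/3) = -(Real.sqrt 3 / 2) := by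
    have h : (2*π*2/3) = π + π/3 := by ring
    rw [h, Real.sin_add, Real.cos_pi, Real.sin_pi, Real.sin_pi_div_three]; ring
  have hsq : Real.sqrt 3 ^ 2 = 3 := Real.sq_sqrt (by norm_num)
  have hpyth := Real.sin_sq_add_cos_sq θ
  refine ⟨?_, ?_, ?_⟩
  · simp only [hL, hφ, hPU, Fin.sum_univ_six, Fin.sum_univ_two, e0, e1, e2, e3, e4, e5,
      Pi.smul_apply, smul_eq_mul, Matrix.cons_val_zero, Matrix.cons_val_one, Matrix.head_cons]
    norm_num [Real.cos_add, Real.sin_add, h1c, h1s, h2c, h2s]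
    linear_combination ((Real.sin θ^2 + Real.cos θ^2)/6) * hsq + (2/3) * hpyth
  · intro k
    fin_cases k <;>
      simp only [hL, hφ, hPU, hB, Fin.sum_univ_six, Fin.sum_univ_two, Matrix.mulVec,
        dotProduct, Matrix.cons_val', Matrix.cons_val_zero, Matrix.cons_val_one,
        Matrix.head_cons, Matrix.empty_val', Matrix.cons_val_fin_one, Matrix.head_fin_const,
        Pi.smul_apply, smul_eq_mul, e0, e1, e2, e3, e4, e5, f0, f1, f2, Fin.isValue] <;>
      norm_num [Real.cos_add, Real.sin_add, h1c, h1s, h2c, h2s]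
    · linear_combination (Real.sin θ^2/6) * hsq + (1/2) * hpyth
    · linear_combination (Real.sin θ^2/6 - Real.cos θ * Real.sin θ * Real.sqrt 3/12
        + Real.cos θ^2 * Real.sqrt 3^2/24 + Real.cos θ^2/8) * hsq + (1/2) * hpyth
    · linear_combination (Real.sin θ^2/6 + Real.cos θ * Real.sin θ * Real.sqrt 3/12
        + Real.cos θ^2 * Real.sqrt 3^2/24 + Real.cos θ^2/8) * hsq + (1/2) * hpyth
  · funext i
    simp only [Fin.sum_univ_six, Pi.smul_apply, Pi.zero_apply, hL, hφ, hPU, e0, e1, e2, e3, e4, e5,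
      smul_eq_mul]
    fin_cases i <;> norm_num
end

section
/- Let B be an m×n nonnegative matrix of the form B = diag(1/√q)·W·diag(√p) where W is column-stochastic, p is a strictly positive probability vector, and q = Wp is strictly positive. Then for all L ∈ ℝ^n, ‖BL‖ ≤ ‖L‖ (the operator norm of B is exactly 1). -/
/-- A divergence transition matrix `B = diag(1/√q) W diag(√p)` with `W` column
stochastic, `p > 0` a probability vector, `q = W p > 0`, is a contraction:
`‖B L‖ ≤ ‖L‖` for all `L` (and the operator norm is exactly `1`). -/
theorem stmt_17 {X Y : Type*} [Fintype X] [Fintype Y]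
    (W : Matrix Y X ℝ) (p : X → ℝ) (q : Y → ℝ)
    (hW0 : ∀ y x, 0 ≤ W y x) (hW1 : ∀ x, ∑ y, W y x = 1)
    (hp : ∀ x, 0 < p x) (hpsum : ∑ x, p x = 1)
    (hq : q = W.mulVec p) (hqpos : ∀ y, 0 < q y)
    (B : Matrix Y X ℝ)
    (hB : B = fun y x => W y x * Real.sqrt (p x) / Real.sqrt (q y)) :
    (∀ L : X → ℝ, ∑ y, (B.mulVec L y) ^ 2 ≤ ∑ x, (L x) ^ 2) ∧
    (∃ L : X → ℝ, (∑ x, (L x) ^ 2 = 1) ∧ ∑ y, (B.mulVec L y) ^ 2 = 1) := by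
  have hqy : ∀ y, q y = ∑ x, W y x * p x := by
    intro y; rw [hq]; rfl
  have hBmul : ∀ (L : X → ℝ) (y : Y),
      B.mulVec L y = (∑ x, W y x * Real.sqrt (p x) * L x) / Real.sqrt (q y) := by
    intro L y
    simp only [hB, Matrix.mulVec, dotProduct]
    rw [Finset.sum_div]
    congr 1; ext x; ring
  constructor
  · intro L
    have key : ∀ y, (B.mulVec L y) ^ 2 ≤ ∑ x, W y x * (L x) ^ 2 := by
      intro y
      rw [hBmul]
      rw [div_pow, Real.sq_sqrt (hqpos y).le]
      rw [div_le_iff₀ (hqpos y)]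
      have cs2 := Finset.sum_mul_sq_le_sq_mul_sq Finset.univ
        (fun x => Real.sqrt (W y x) * Real.sqrt (p x))
        (fun x => Real.sqrt (W y x) * L x)
      have e1 : ∀ x, Real.sqrt (W y x) * Real.sqrt (p x) * (Real.sqrt (W y x) * L x)
          = W y x * Real.sqrt (p x) * L x := by
        intro x
        have : Real.sqrt (W y x) * Real.sqrt (W y x) = W y x :=
          Real.mul_self_sqrt (hW0 y x)
        calc Real.sqrt (W y x) * Real.sqrt (p x) * (Real.sqrt (W y x) * L x)
            = Real.sqrt (W y x) * Real.sqrt (W y x) * (Real.sqrt (p x) * L x) := by ring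
          _ = W y x * Real.sqrt (p x) * L x := by rw [this]; ring
      have e2 : ∀ x, (Real.sqrt (W y x) * Real.sqrt (p x)) ^ 2 = W y x * p x := by
        intro x
        rw [mul_pow, Real.sq_sqrt (hW0 y x), Real.sq_sqrt (hp x).le]
      have e3 : ∀ x, (Real.sqrt (W y x) * L x) ^ 2 = W y x * (L x) ^ 2 := by
        intro x
        rw [mul_pow, Real.sq_sqrt (hW0 y x)]
      simp only [e1, e2, e3] at cs2
      calc (∑ x, W y x * Real.sqrt (p x) * L x) ^ 2
          ≤ (∑ x, W y x * p x) * ∑ x, W y x * (L x) ^ 2 := cs2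
        _ = (∑ x, W y x * (L x) ^ 2) * q y := by rw [hqy y]; ring
    calc ∑ y, (B.mulVec L y) ^ 2 ≤ ∑ y, ∑ x, W y x * (L x) ^ 2 :=
          Finset.sum_le_sum fun y _ => key y
      _ = ∑ x, (L x) ^ 2 := by
          rw [Finset.sum_comm]
          congr 1; ext x
          rw [← Finset.sum_mul, hW1 x, one_mul]
  · refine ⟨fun x => Real.sqrt (p x), ?_, ?_⟩
    · have hsp : ∀ x, Real.sqrt (p x) ^ 2 = p x := fun x => Real.sq_sqrt (hp x).le
      simp only [hsp]; exact hpsum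
    · have hBv : ∀ y, B.mulVec (fun x => Real.sqrt (p x)) y = Real.sqrt (q y) := by
        intro y
        rw [hBmul]
        have : ∀ x, W y x * Real.sqrt (p x) * Real.sqrt (p x) = W y x * p x := by
          intro x
          rw [mul_assoc, Real.mul_self_sqrt (hp x).le]
        simp only [this]
        rw [← hqy y, div_eq_iff (Real.sqrt_pos.mpr (hqpos y)).ne']
        rw [Real.mul_self_sqrt (hqpos y).le]
      have hsq : ∀ y, Real.sqrt (q y) ^ 2 = q y := fun y => Real.sq_sqrt (hqpos y).le
      simp only [hBv, hsq]
      simp only [hqy]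
      rw [Finset.sum_comm]
      calc ∑ x, ∑ y, W y x * p x = ∑ x, p x := by
            refine Finset.sum_congr rfl fun x _ => ?_
            rw [← Finset.sum_mul, hW1 x, one_mul]
        _ = 1 := hpsum
end

section
/- Let B₁, B₂ be matrices with the structure B_i = diag(1/√q_i)·W_i·diag(√p), each with top singular value 1 and common top right singular vector v₀ = √p. Then sup over unit vectors L ∈ (ℝ^n)^{⊗2} orthogonal to v₀⊗v₀ of min{‖B₁^{⊗2}L‖², ‖B₂^{⊗2}L‖²} equals sup over unit vectors ℓ ∈ ℝ^n orthogonal to v₀ of min{‖B₁ℓ‖², ‖B₂ℓ‖²}; i.e., the 2-letter linear information coupling value for 2 receivers equals the single-letter value. -/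
set_option linter.unusedSectionVars false
set_option maxHeartbeats 1000000

open Finset Real

namespace Stmt18Aux

variable {X Y Y1 Y2 : Type*} [Fintype X] [Fintype Y] [Fintype Y1] [Fintype Y2]

/-- quadratic form `‖B l‖²`. -/
noncomputable def qf (B : Matrix Y X ℝ) (l : X → ℝ) : ℝ := ∑ y, (B.mulVec l y) ^ 2

lemma qf_nonneg (B : Matrix Y X ℝ) (l : X → ℝ) : 0 ≤ qf B l :=
  Finset.sum_nonneg fun _ _ => sq_nonneg _

lemma mulVec_comb (B : Matrix Y X ℝ) (c s : ℝ) (u v : X → ℝ) (y : Y) :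
    B.mulVec (fun x => c * u x + s * v x) y = c * B.mulVec u y + s * B.mulVec v y := by
  simp only [Matrix.mulVec, dotProduct, Finset.mul_sum, ← Finset.sum_add_distrib]
  exact Finset.sum_congr rfl fun x _ => by ring

lemma mulVec_smul' (B : Matrix Y X ℝ) (c : ℝ) (u : X → ℝ) (y : Y) :
    B.mulVec (fun x => c * u x) y = c * B.mulVec u y := by
  simpa using mulVec_comb B c 0 u u y

lemma qf_smul (B : Matrix Y X ℝ) (c : ℝ) (u : X → ℝ) :
    qf B (fun x => c * u x) = c ^ 2 * qf B u := by
  simp only [qf, mulVec_smul', mul_pow, Finset.mul_sum]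

lemma qf_eq_zero (B : Matrix Y X ℝ) (u : X → ℝ) (h : ∑ x, (u x) ^ 2 = 0) :
    qf B u = 0 := by
  have hu : ∀ x, u x = 0 := by
    intro x
    have := (Finset.sum_eq_zero_iff_of_nonneg (fun i _ => sq_nonneg (u i))).1 h x (mem_univ x)
    exact pow_eq_zero_iff (two_ne_zero) |>.1 this
  have : u = fun _ => 0 := funext hu
  subst this
  simp [qf, Matrix.mulVec, dotProduct]

lemma sum_sq_smul (c : ℝ) (u : X → ℝ) :
    ∑ x, (c * u x) ^ 2 = c ^ 2 * ∑ x, (u x) ^ 2 := by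
  simp [mul_pow, Finset.mul_sum]

/-- normalize a vector with the guarantee. -/
lemma pick (B1 : Matrix Y1 X ℝ) (B2 : Matrix Y2 X ℝ) (v0 : X → ℝ) (w : X → ℝ)
    (hw : ∑ x, w x * v0 x = 0) (hn : 0 < ∑ x, (w x) ^ 2) (N A1 A2 : ℝ)
    (h1 : A1 * (∑ x, (w x) ^ 2) ≤ N * qf B1 w)
    (h2 : A2 * (∑ x, (w x) ^ 2) ≤ N * qf B2 w) :
    ∃ z : X → ℝ, (∑ x, (z x) ^ 2 = 1) ∧ (∑ x, z x * v0 x = 0) ∧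
      A1 ≤ N * qf B1 z ∧ A2 ≤ N * qf B2 z := by
  set n := ∑ x, (w x) ^ 2 with hndef
  have hsq : ((Real.sqrt n)⁻¹) ^ 2 = n⁻¹ := by
    rw [← Real.sqrt_inv, Real.sq_sqrt (by positivity)]
  refine ⟨fun x => (Real.sqrt n)⁻¹ * w x, ?_, ?_, ?_, ?_⟩
  · rw [sum_sq_smul, hsq, ← hndef]
    field_simp
  · simp only [mul_assoc, ← Finset.mul_sum, hw, mul_zero]
  · rw [qf_smul, hsq]
    calc A1 = A1 * n * n⁻¹ := by field_simp
    _ ≤ N * qf B1 w * n⁻¹ := by gcongr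
    _ = N * (n⁻¹ * qf B1 w) := by ring
  · rw [qf_smul, hsq]
    calc A2 = A2 * n * n⁻¹ := by field_simp
    _ ≤ N * qf B2 w * n⁻¹ := by gcongr
    _ = N * (n⁻¹ * qf B2 w) := by ring


/-- key rotation decomposition: `q(cosθ u + sinθ v) + q(-sinθ u + cosθ v) = q(u)+q(v)`. -/
lemma qf_rot (B : Matrix Y X ℝ) (u v : X → ℝ) (θ : ℝ) :
    qf B (fun x => Real.cos θ * u x + Real.sin θ * v x)
      + qf B (fun x => -Real.sin θ * u x + Real.cos θ * v x) = qf B u + qf B v := by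
  simp only [qf, mulVec_comb, ← Finset.sum_add_distrib]
  refine Finset.sum_congr rfl fun y _ => ?_
  have h := Real.sin_sq_add_cos_sq θ
  nlinarith [h]

lemma sum_sq_rot (u v : X → ℝ) (θ : ℝ) :
    (∑ x, (Real.cos θ * u x + Real.sin θ * v x) ^ 2)
      + (∑ x, (-Real.sin θ * u x + Real.cos θ * v x) ^ 2)
      = (∑ x, (u x) ^ 2) + (∑ x, (v x) ^ 2) := by
  simp only [← Finset.sum_add_distrib]
  refine Finset.sum_congr rfl fun x _ => ?_
  have h := Real.sin_sq_add_cos_sq θ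
  nlinarith [h]

lemma orth_rot (v0 u v : X → ℝ) (hu : ∑ x, u x * v0 x = 0) (hv : ∑ x, v x * v0 x = 0)
    (c s : ℝ) : ∑ x, (c * u x + s * v x) * v0 x = 0 := by
  have : ∀ x, (c * u x + s * v x) * v0 x = c * (u x * v0 x) + s * (v x * v0 x) :=
    fun x => by ring
  simp only [this, Finset.sum_add_distrib, ← Finset.mul_sum, hu, hv, mul_zero, add_zero]

lemma ivt_zero (F : ℝ → ℝ) (hF : Continuous F) (hsum : F 0 + F (Real.pi / 2) = 0) :
    ∃ θ : ℝ, F θ = 0 := by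
  rcases le_total (F 0) 0 with h | h
  · have hmem : (0:ℝ) ∈ Set.Icc (F 0) (F (Real.pi / 2)) := ⟨h, by linarith⟩
    obtain ⟨θ, _, hθ2⟩ := intermediate_value_Icc
      (by positivity : (0:ℝ) ≤ Real.pi / 2) hF.continuousOn hmem
    exact ⟨θ, hθ2⟩
  · have hmem : (0:ℝ) ∈ Set.Icc (F (Real.pi / 2)) (F 0) := ⟨by linarith, h⟩
    obtain ⟨θ, _, hθ2⟩ := intermediate_value_Icc'
      (by positivity : (0:ℝ) ≤ Real.pi / 2) hF.continuousOn hmem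
    exact ⟨θ, hθ2⟩

/-- the two-vector merging lemma. -/
lemma merge_two (B1 : Matrix Y1 X ℝ) (B2 : Matrix Y2 X ℝ) (v0 : X → ℝ) (u v : X → ℝ)
    (hu : ∑ x, u x * v0 x = 0) (hv : ∑ x, v x * v0 x = 0)
    (hN : 0 < (∑ x, (u x) ^ 2) + (∑ x, (v x) ^ 2)) :
    ∃ z : X → ℝ, (∑ x, (z x) ^ 2 = 1) ∧ (∑ x, z x * v0 x = 0) ∧
      qf B1 u + qf B1 v ≤ ((∑ x, (u x) ^ 2) + (∑ x, (v x) ^ 2)) * qf B1 z ∧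
      qf B2 u + qf B2 v ≤ ((∑ x, (u x) ^ 2) + (∑ x, (v x) ^ 2)) * qf B2 z := by
  set N := (∑ x, (u x) ^ 2) + (∑ x, (v x) ^ 2) with hNdef
  set A1 := qf B1 u + qf B1 v with hA1def
  set A2 := qf B2 u + qf B2 v with hA2def
  have hA1nn : 0 ≤ A1 := add_nonneg (qf_nonneg _ _) (qf_nonneg _ _)
  have hA2nn : 0 ≤ A2 := add_nonneg (qf_nonneg _ _) (qf_nonneg _ _)
  by_cases hA : A1 + A2 = 0
  · -- both A1 = A2 = 0
    have hA1 : A1 = 0 := by linarith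
    have hA2 : A2 = 0 := by linarith
    rcases lt_or_ge 0 (∑ x, (u x) ^ 2) with h | h
    · exact pick B1 B2 v0 u hu h N A1 A2
        (by rw [hA1, zero_mul]; exact mul_nonneg hN.le (qf_nonneg _ _))
        (by rw [hA2, zero_mul]; exact mul_nonneg hN.le (qf_nonneg _ _))
    · have hvpos : 0 < ∑ x, (v x) ^ 2 := by
        have h2 := Finset.sum_nonneg (fun x (_ : x ∈ (univ : Finset X)) => sq_nonneg (u x))
        rw [hNdef] at hN; linarith
      exact pick B1 B2 v0 v hv hvpos N A1 A2
        (by rw [hA1, zero_mul]; exact mul_nonneg hN.le (qf_nonneg _ _))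
        (by rw [hA2, zero_mul]; exact mul_nonneg hN.le (qf_nonneg _ _))
  have hApos : 0 < A1 + A2 := lt_of_le_of_ne (by linarith) (Ne.symm hA)
  -- IVT to find the balanced rotation angle
  have hc1 : Continuous fun θ : ℝ =>
      qf B1 (fun x => Real.cos θ * u x + Real.sin θ * v x) := by
    have he : (fun θ : ℝ => qf B1 (fun x => Real.cos θ * u x + Real.sin θ * v x))
        = fun θ : ℝ => ∑ y, (Real.cos θ * B1.mulVec u y + Real.sin θ * B1.mulVec v y) ^ 2 := by
      funext θ; simp only [qf, mulVec_comb]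
    rw [he]
    exact continuous_finset_sum _ fun y _ =>
      ((Real.continuous_cos.mul continuous_const).add
        (Real.continuous_sin.mul continuous_const)).pow 2
  have hc2 : Continuous fun θ : ℝ =>
      qf B2 (fun x => Real.cos θ * u x + Real.sin θ * v x) := by
    have he : (fun θ : ℝ => qf B2 (fun x => Real.cos θ * u x + Real.sin θ * v x))
        = fun θ : ℝ => ∑ y, (Real.cos θ * B2.mulVec u y + Real.sin θ * B2.mulVec v y) ^ 2 := by
      funext θ; simp only [qf, mulVec_comb]
    rw [he]
    exact continuous_finset_sum _ fun y _ =>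
      ((Real.continuous_cos.mul continuous_const).add
        (Real.continuous_sin.mul continuous_const)).pow 2
  obtain ⟨θ, hθ0⟩ := ivt_zero
    (fun θ => qf B1 (fun x => Real.cos θ * u x + Real.sin θ * v x) * A2
      - qf B2 (fun x => Real.cos θ * u x + Real.sin θ * v x) * A1)
    ((hc1.mul continuous_const).sub (hc2.mul continuous_const))
    (by simp only [Real.cos_zero, Real.sin_zero, Real.cos_pi_div_two, Real.sin_pi_div_two,
          one_mul, zero_mul, add_zero, zero_add]
        rw [hA1def, hA2def]; ring)

  set w1 : X → ℝ := fun x => Real.cos θ * u x + Real.sin θ * v x with hw1def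
  set w2 : X → ℝ := fun x => -Real.sin θ * u x + Real.cos θ * v x with hw2def
  have hw1orth : ∑ x, w1 x * v0 x = 0 := orth_rot v0 u v hu hv _ _
  have hw2orth : ∑ x, w2 x * v0 x = 0 := orth_rot v0 u v hu hv _ _
  have hq1 : qf B1 w1 + qf B1 w2 = A1 := qf_rot B1 u v θ
  have hq2 : qf B2 w1 + qf B2 w2 = A2 := qf_rot B2 u v θ
  have hnorm : (∑ x, (w1 x) ^ 2) + (∑ x, (w2 x) ^ 2) = N := sum_sq_rot u v θ
  set b1 := qf B1 w2 with hb1def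
  set b2 := qf B2 w2 with hb2def
  set a1 := qf B1 w1 with ha1def
  set a2 := qf B2 w1 with ha2def
  set n1 := ∑ x, (w1 x) ^ 2 with hn1def
  set n2 := ∑ x, (w2 x) ^ 2 with hn2def
  have hn1nn : 0 ≤ n1 := Finset.sum_nonneg fun _ _ => sq_nonneg _
  have hn2nn : 0 ≤ n2 := Finset.sum_nonneg fun _ _ => sq_nonneg _
  have hn1z : n1 = 0 → a1 = 0 ∧ a2 = 0 :=
    fun h => ⟨qf_eq_zero B1 w1 h, qf_eq_zero B2 w1 h⟩
  have hn2z : n2 = 0 → b1 = 0 ∧ b2 = 0 :=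
    fun h => ⟨qf_eq_zero B1 w2 h, qf_eq_zero B2 w2 h⟩
  have hrel : a1 * A2 = a2 * A1 := by linarith
  have ha1nn : 0 ≤ a1 := qf_nonneg _ _
  have ha2nn : 0 ≤ a2 := qf_nonneg _ _
  have hb1nn : 0 ≤ b1 := qf_nonneg _ _
  have hb2nn : 0 ≤ b2 := qf_nonneg _ _
  -- now everything is abstract real arithmetic plus `pick`
  have hgoal : ∀ w : X → ℝ, (∑ x, w x * v0 x = 0) → 0 < (∑ x, (w x) ^ 2) →
      A1 * (∑ x, (w x) ^ 2) ≤ N * qf B1 w → A2 * (∑ x, (w x) ^ 2) ≤ N * qf B2 w →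
      ∃ z : X → ℝ, (∑ x, (z x) ^ 2 = 1) ∧ (∑ x, z x * v0 x = 0) ∧
        A1 ≤ N * qf B1 z ∧ A2 ≤ N * qf B2 z := fun w hw hn h1 h2 =>
    pick B1 B2 v0 w hw hn N A1 A2 h1 h2
  set t := (a1 + a2) / (A1 + A2) with htdef
  have ht1 : a1 = t * A1 := by
    rw [htdef, div_mul_eq_mul_div, eq_div_iff hApos.ne']
    linear_combination hrel
  have ht2 : a2 = t * A2 := by
    rw [htdef, div_mul_eq_mul_div, eq_div_iff hApos.ne']
    linear_combination (-1 : ℝ) * hrel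
  rcases le_or_gt n1 (t * N) with hpig | hpig
  · rcases lt_or_ge 0 n1 with hn1pos | hn1le
    · refine hgoal w1 hw1orth (by rw [← hn1def]; exact hn1pos) ?_ ?_
      · rw [← hn1def, ← ha1def, ht1]
        calc A1 * n1 ≤ A1 * (t * N) := mul_le_mul_of_nonneg_left hpig hA1nn
        _ = N * (t * A1) := by ring
      · rw [← hn1def, ← ha2def, ht2]
        calc A2 * n1 ≤ A2 * (t * N) := mul_le_mul_of_nonneg_left hpig hA2nn
        _ = N * (t * A2) := by ring
    · obtain ⟨hz1, hz2⟩ := hn1z (le_antisymm hn1le hn1nn)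
      have hn2N : n2 = N := by linarith [le_antisymm hn1le hn1nn]
      refine hgoal w2 hw2orth (by rw [← hn2def, hn2N]; exact hN) ?_ ?_
      · rw [← hn2def, hn2N, ← hb1def]
        have hf : b1 = A1 := by linarith
        rw [hf, mul_comm]
      · rw [← hn2def, hn2N, ← hb2def]
        have hf : b2 = A2 := by linarith
        rw [hf, mul_comm]
  · have hpig2 : n2 ≤ (1 - t) * N := by nlinarith
    rcases lt_or_ge 0 n2 with hn2pos | hn2le
    · refine hgoal w2 hw2orth (by rw [← hn2def]; exact hn2pos) ?_ ?_
      · rw [← hn2def, ← hb1def]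
        have hf : b1 = (1 - t) * A1 := by linarith
        rw [hf]
        calc A1 * n2 ≤ A1 * ((1 - t) * N) := mul_le_mul_of_nonneg_left hpig2 hA1nn
        _ = N * ((1 - t) * A1) := by ring
      · rw [← hn2def, ← hb2def]
        have hf : b2 = (1 - t) * A2 := by linarith
        rw [hf]
        calc A2 * n2 ≤ A2 * ((1 - t) * N) := mul_le_mul_of_nonneg_left hpig2 hA2nn
        _ = N * ((1 - t) * A2) := by ring
    · obtain ⟨hz1, hz2⟩ := hn2z (le_antisymm hn2le hn2nn)
      have hn1N : n1 = N := by linarith [le_antisymm hn2le hn2nn]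
      refine hgoal w1 hw1orth (by rw [← hn1def, hn1N]; exact hN) ?_ ?_
      · rw [← hn1def, hn1N, ← ha1def]
        have hf : a1 = A1 := by linarith
        rw [hf, mul_comm]
      · rw [← hn1def, hn1N, ← ha2def]
        have hf : a2 = A2 := by linarith
        rw [hf, mul_comm]


/-- merging a finite family of vectors. -/
lemma merge_fam {ι : Type*} [DecidableEq ι] (B1 : Matrix Y1 X ℝ) (B2 : Matrix Y2 X ℝ)
    (v0 : X → ℝ) (s : Finset ι) (u : ι → X → ℝ)
    (horth : ∀ k ∈ s, ∑ x, u k x * v0 x = 0)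
    (hN : 0 < ∑ k ∈ s, ∑ x, (u k x) ^ 2) :
    ∃ z : X → ℝ, (∑ x, (z x) ^ 2 = 1) ∧ (∑ x, z x * v0 x = 0) ∧
      (∑ k ∈ s, qf B1 (u k)) ≤ (∑ k ∈ s, ∑ x, (u k x) ^ 2) * qf B1 z ∧
      (∑ k ∈ s, qf B2 (u k)) ≤ (∑ k ∈ s, ∑ x, (u k x) ^ 2) * qf B2 z := by
  induction s using Finset.induction_on with
  | empty => simp at hN
  | @insert a s' ha ih =>
    have horth' : ∀ k ∈ s', ∑ x, u k x * v0 x = 0 :=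
      fun k hk => horth k (Finset.mem_insert_of_mem hk)
    have hortha : ∑ x, u a x * v0 x = 0 := horth a (Finset.mem_insert_self a s')
    simp only [Finset.sum_insert ha] at hN ⊢
    have hNs_nn : 0 ≤ ∑ k ∈ s', ∑ x, (u k x) ^ 2 :=
      Finset.sum_nonneg fun k _ => Finset.sum_nonneg fun x _ => sq_nonneg _
    rcases lt_or_ge 0 (∑ k ∈ s', ∑ x, (u k x) ^ 2) with hNs | hNs
    · obtain ⟨z', hz'1, hz'2, hz'3, hz'4⟩ := ih horth' hNs
      set Ns := ∑ k ∈ s', ∑ x, (u k x) ^ 2 with hNsdef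
      set w : X → ℝ := fun x => Real.sqrt Ns * z' x with hwdef
      have hwnorm : ∑ x, (w x) ^ 2 = Ns := by
        rw [hwdef]
        rw [sum_sq_smul, Real.sq_sqrt hNs_nn, hz'1, mul_one]
      have hworth : ∑ x, w x * v0 x = 0 := by
        rw [hwdef]
        simp only [mul_assoc, ← Finset.mul_sum, hz'2, mul_zero]
      have hwq1 : qf B1 w = Ns * qf B1 z' := by
        rw [hwdef, qf_smul, Real.sq_sqrt hNs_nn]
      have hwq2 : qf B2 w = Ns * qf B2 z' := by
        rw [hwdef, qf_smul, Real.sq_sqrt hNs_nn]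
      obtain ⟨z, hz1, hz2, hz3, hz4⟩ := merge_two B1 B2 v0 (u a) w hortha hworth
        (by rw [hwnorm]; linarith)
      rw [hwnorm] at hz3 hz4
      exact ⟨z, hz1, hz2, by linarith, by linarith⟩
    · have hNs0 : ∑ k ∈ s', ∑ x, (u k x) ^ 2 = 0 := le_antisymm hNs hNs_nn
      have hz : ∀ k ∈ s', ∑ x, (u k x) ^ 2 = 0 := fun k hk =>
        (Finset.sum_eq_zero_iff_of_nonneg
          (fun k _ => Finset.sum_nonneg fun x _ => sq_nonneg _)).1 hNs0 k hk
      have hq1z : ∑ k ∈ s', qf B1 (u k) = 0 :=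
        Finset.sum_eq_zero fun k hk => qf_eq_zero B1 (u k) (hz k hk)
      have hq2z : ∑ k ∈ s', qf B2 (u k) = 0 :=
        Finset.sum_eq_zero fun k hk => qf_eq_zero B2 (u k) (hz k hk)
      have hna : 0 < ∑ x, (u a x) ^ 2 := by linarith
      obtain ⟨z, hz1, hz2, hz3, hz4⟩ := pick B1 B2 v0 (u a) hortha hna
        ((∑ x, (u a x) ^ 2) + ∑ k ∈ s', ∑ x, (u k x) ^ 2)
        (qf B1 (u a)) (qf B2 (u a))
        (by rw [hNs0, add_zero, mul_comm]) (by rw [hNs0, add_zero, mul_comm])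
      exact ⟨z, hz1, hz2, by rw [hq1z, add_zero]; exact hz3,
        by rw [hq2z, add_zero]; exact hz4⟩

/-- channel contraction : `‖B g‖² ≤ ‖g‖²` for a DTM-normalized channel matrix. -/
lemma channel_contract (W : Matrix Y X ℝ) (p : X → ℝ) (q : Y → ℝ)
    (hW0 : ∀ y x, 0 ≤ W y x) (hW1 : ∀ x, ∑ y, W y x = 1)
    (hp : ∀ x, 0 ≤ p x) (hq : ∀ y, q y = ∑ x, W y x * p x) (hqpos : ∀ y, 0 < q y)
    (B : Matrix Y X ℝ) (hB : ∀ y x, B y x = W y x * Real.sqrt (p x) / Real.sqrt (q y))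
    (g : X → ℝ) : qf B g ≤ ∑ x, (g x) ^ 2 := by
  have hrow : ∀ y, (B.mulVec g y) ^ 2 ≤ ∑ x, W y x * (g x) ^ 2 := by
    intro y
    have key := Finset.sum_mul_sq_le_sq_mul_sq Finset.univ
      (fun x => Real.sqrt (W y x * p x)) (fun x => Real.sqrt (W y x) * g x)
    have e1 : ∀ x, Real.sqrt (W y x * p x) * (Real.sqrt (W y x) * g x)
        = W y x * Real.sqrt (p x) * g x := by
      intro x
      rw [Real.sqrt_mul (hW0 y x), show Real.sqrt (W y x) * Real.sqrt (p x)
          * (Real.sqrt (W y x) * g x)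
        = (Real.sqrt (W y x) * Real.sqrt (W y x)) * (Real.sqrt (p x) * g x) from by ring,
        Real.mul_self_sqrt (hW0 y x)]
      ring
    have e2 : ∀ x, (Real.sqrt (W y x * p x)) ^ 2 = W y x * p x :=
      fun x => Real.sq_sqrt (mul_nonneg (hW0 y x) (hp x))
    have e3 : ∀ x, (Real.sqrt (W y x) * g x) ^ 2 = W y x * (g x) ^ 2 := by
      intro x; rw [mul_pow, Real.sq_sqrt (hW0 y x)]
    simp only [e1, e2, e3] at key
    have hm : B.mulVec g y = (∑ x, W y x * Real.sqrt (p x) * g x) / Real.sqrt (q y) := by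
      simp only [Matrix.mulVec, dotProduct, hB, Finset.sum_div]
      exact Finset.sum_congr rfl fun x _ => by ring
    rw [hm, div_pow, Real.sq_sqrt (hqpos y).le, div_le_iff₀ (hqpos y)]
    calc (∑ x, W y x * Real.sqrt (p x) * g x) ^ 2
        ≤ (∑ x, W y x * p x) * ∑ x, W y x * (g x) ^ 2 := key
    _ = (∑ x, W y x * (g x) ^ 2) * q y := by rw [← hq y]; ring
  calc qf B g ≤ ∑ y, ∑ x, W y x * (g x) ^ 2 := Finset.sum_le_sum fun y _ => hrow y
  _ = ∑ x, (∑ y, W y x) * (g x) ^ 2 := by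
      rw [Finset.sum_comm]
      exact Finset.sum_congr rfl fun x _ => by rw [Finset.sum_mul]
  _ = ∑ x, (g x) ^ 2 := Finset.sum_congr rfl fun x _ => by rw [hW1, one_mul]

/-- `B √p = √q`. -/
lemma B_mulVec_sqrtp (W : Matrix Y X ℝ) (p : X → ℝ) (q : Y → ℝ)
    (hp : ∀ x, 0 ≤ p x) (hq : ∀ y, q y = ∑ x, W y x * p x) (hqpos : ∀ y, 0 < q y)
    (B : Matrix Y X ℝ) (hB : ∀ y x, B y x = W y x * Real.sqrt (p x) / Real.sqrt (q y))
    (y : Y) : B.mulVec (fun x => Real.sqrt (p x)) y = Real.sqrt (q y) := by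
  simp only [Matrix.mulVec, dotProduct, hB]
  have e : ∀ x, W y x * Real.sqrt (p x) / Real.sqrt (q y) * Real.sqrt (p x)
      = (W y x * p x) / Real.sqrt (q y) := by
    intro x
    rw [show W y x * Real.sqrt (p x) / Real.sqrt (q y) * Real.sqrt (p x)
      = W y x * (Real.sqrt (p x) * Real.sqrt (p x)) / Real.sqrt (q y) from by ring,
      Real.mul_self_sqrt (hp x)]
  simp only [e, ← Finset.sum_div, ← hq y]
  exact Real.div_sqrt

/-- `Bᵀ √q = √p`. -/
lemma B_transpose_sqrtq (W : Matrix Y X ℝ) (p : X → ℝ) (q : Y → ℝ)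
    (hW1 : ∀ x, ∑ y, W y x = 1) (hqpos : ∀ y, 0 < q y)
    (B : Matrix Y X ℝ) (hB : ∀ y x, B y x = W y x * Real.sqrt (p x) / Real.sqrt (q y))
    (x : X) : ∑ y, B y x * Real.sqrt (q y) = Real.sqrt (p x) := by
  have e : ∀ y, B y x * Real.sqrt (q y) = W y x * Real.sqrt (p x) := by
    intro y
    rw [hB]
    rw [div_mul_cancel₀]
    exact Real.sqrt_ne_zero'.2 (hqpos y)
  simp only [e, ← Finset.sum_mul, hW1 x, one_mul]

/-- `∑ q = 1`. -/
lemma sum_q_eq_one (W : Matrix Y X ℝ) (p : X → ℝ) (q : Y → ℝ)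
    (hW1 : ∀ x, ∑ y, W y x = 1) (hpsum : ∑ x, p x = 1)
    (hq : ∀ y, q y = ∑ x, W y x * p x) : ∑ y, q y = 1 := by
  simp only [hq]
  rw [Finset.sum_comm]
  calc ∑ x, ∑ y, W y x * p x = ∑ x, (∑ y, W y x) * p x :=
        Finset.sum_congr rfl fun x _ => by rw [Finset.sum_mul]
  _ = 1 := by simp only [hW1, one_mul, hpsum]


lemma sum_prod_mul {α β : Type*} [Fintype α] [Fintype β] (f : α → ℝ) (g : β → ℝ) :
    ∑ s : α × β, f s.1 * g s.2 = (∑ x, f x) * (∑ x, g x) := by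
  rw [Fintype.sum_prod_type, Finset.sum_mul_sum]

/-- Decomposition bound for the tensor-square channel. -/
lemma decomp_bound (B : Matrix Y X ℝ) (Bt : Matrix (Y × Y) (X × X) ℝ)
    (hBt : ∀ r s, Bt r s = B r.1 s.1 * B r.2 s.2)
    (v : X → ℝ) (u0 : Y → ℝ)
    (hBv : ∀ y, B.mulVec v y = u0 y)
    (hBtu : ∀ x, ∑ y, B y x * u0 y = v x)
    (hu0 : ∑ y, (u0 y) ^ 2 = 1)
    (hcontract : ∀ g : X → ℝ, qf B g ≤ ∑ x, (g x) ^ 2)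
    (L : X × X → ℝ) (l1 l2 : X → ℝ) (M : X × X → ℝ)
    (hM : ∀ s : X × X, L s = M s + l1 s.1 * v s.2 + v s.1 * l2 s.2)
    (hM2 : ∀ x1, ∑ x2, M (x1, x2) * v x2 = 0)
    (hM1 : ∀ x2, ∑ x1, M (x1, x2) * v x1 = 0)
    (horth1 : ∑ x, l1 x * v x = 0) (horth2 : ∑ x, l2 x * v x = 0) :
    qf Bt L ≤ qf B l1 + qf B l2 + ∑ x2, qf B (fun x1 => M (x1, x2)) := by
  set a : Y → ℝ := B.mulVec l1 with hadef
  set b : Y → ℝ := B.mulVec l2 with hbdef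
  set D : (Y × Y) → ℝ := Bt.mulVec M with hDdef
  have hqa : qf B l1 = ∑ y, (a y) ^ 2 := rfl
  have hqb : qf B l2 = ∑ y, (b y) ^ 2 := rfl
  have hqD : qf Bt M = ∑ t : Y × Y, (D t) ^ 2 := rfl
  have ha : ∀ y, a y = ∑ x, B y x * l1 x := fun y => rfl
  have hb : ∀ y, b y = ∑ x, B y x * l2 x := fun y => rfl
  have hD : ∀ t : Y × Y, D t = ∑ s : X × X, B t.1 s.1 * B t.2 s.2 * M s := by
    intro t
    rw [hDdef]
    simp only [Matrix.mulVec, dotProduct]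
    exact Finset.sum_congr rfl fun s _ => by rw [hBt]
  -- image splitting
  have hsplit : ∀ t : Y × Y, Bt.mulVec L t = a t.1 * u0 t.2 + u0 t.1 * b t.2 + D t := by
    rintro ⟨y1, y2⟩
    have e1 : Bt.mulVec L (y1, y2)
        = ∑ s : X × X, (B y1 s.1 * B y2 s.2 * M s + (B y1 s.1 * l1 s.1) * (B y2 s.2 * v s.2)
          + (B y1 s.1 * v s.1) * (B y2 s.2 * l2 s.2)) := by
      simp only [Matrix.mulVec, dotProduct]
      exact Finset.sum_congr rfl fun s _ => by rw [hBt, hM s]; ring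
    rw [e1, Finset.sum_add_distrib, Finset.sum_add_distrib]
    rw [sum_prod_mul (fun x => B y1 x * l1 x) (fun x => B y2 x * v x)]
    rw [sum_prod_mul (fun x => B y1 x * v x) (fun x => B y2 x * l2 x)]
    have hv1 : ∑ x, B y1 x * v x = u0 y1 := hBv y1
    have hv2 : ∑ x, B y2 x * v x = u0 y2 := hBv y2
    rw [hv1, hv2, ← ha y1, ← hb y2, ← hD (y1, y2)]
    ring
  -- cross terms vanish
  have hau : ∑ y, a y * u0 y = 0 := by
    have e : ∀ y, a y * u0 y = ∑ x, B y x * u0 y * l1 x := by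
      intro y; rw [ha y, Finset.sum_mul]
      exact Finset.sum_congr rfl fun x _ => by ring
    rw [Finset.sum_congr rfl fun y _ => e y, Finset.sum_comm]
    have e2 : ∀ x, ∑ y, B y x * u0 y * l1 x = l1 x * v x := by
      intro x
      rw [← Finset.sum_mul, hBtu x, mul_comm]
    rw [Finset.sum_congr rfl fun x _ => e2 x, horth1]
  have hbu : ∑ y, u0 y * b y = 0 := by
    have e : ∀ y, u0 y * b y = ∑ x, B y x * u0 y * l2 x := by
      intro y; rw [hb y, Finset.mul_sum]
      exact Finset.sum_congr rfl fun x _ => by ring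
    rw [Finset.sum_congr rfl fun y _ => e y, Finset.sum_comm]
    have e2 : ∀ x, ∑ y, B y x * u0 y * l2 x = l2 x * v x := by
      intro x
      rw [← Finset.sum_mul, hBtu x, mul_comm]
    rw [Finset.sum_congr rfl fun x _ => e2 x, horth2]
  have hDau : ∀ y1, ∑ y2, u0 y2 * D (y1, y2) = 0 := by
    intro y1
    have e : ∀ y2, u0 y2 * D (y1, y2)
        = ∑ s : X × X, B y1 s.1 * M s * (B y2 s.2 * u0 y2) := by
      intro y2
      rw [hD (y1, y2), Finset.mul_sum]
      exact Finset.sum_congr rfl fun s _ => by ring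
    rw [Finset.sum_congr rfl fun y2 _ => e y2, Finset.sum_comm]
    have e2 : ∀ s : X × X, ∑ y2, B y1 s.1 * M s * (B y2 s.2 * u0 y2)
        = B y1 s.1 * M s * v s.2 := by
      intro s
      rw [← Finset.mul_sum, hBtu s.2]
    rw [Finset.sum_congr rfl fun s _ => e2 s, Fintype.sum_prod_type]
    have e3 : ∀ x1, ∑ x2, B y1 x1 * M (x1, x2) * v x2
        = B y1 x1 * ∑ x2, M (x1, x2) * v x2 := by
      intro x1
      rw [Finset.mul_sum]
      exact Finset.sum_congr rfl fun x2 _ => by ring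
    rw [Finset.sum_congr rfl fun x1 _ => e3 x1]
    simp only [hM2, mul_zero, Finset.sum_const_zero]
  have hDbu : ∀ y2, ∑ y1, u0 y1 * D (y1, y2) = 0 := by
    intro y2
    have e : ∀ y1, u0 y1 * D (y1, y2)
        = ∑ s : X × X, B y2 s.2 * M s * (B y1 s.1 * u0 y1) := by
      intro y1
      rw [hD (y1, y2), Finset.mul_sum]
      exact Finset.sum_congr rfl fun s _ => by ring
    rw [Finset.sum_congr rfl fun y1 _ => e y1, Finset.sum_comm]
    have e2 : ∀ s : X × X, ∑ y1, B y2 s.2 * M s * (B y1 s.1 * u0 y1)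
        = B y2 s.2 * M s * v s.1 := by
      intro s
      rw [← Finset.mul_sum, hBtu s.1]
    rw [Finset.sum_congr rfl fun s _ => e2 s, Fintype.sum_prod_type, Finset.sum_comm]
    have e3 : ∀ x2, ∑ x1, B y2 x2 * M (x1, x2) * v x1
        = B y2 x2 * ∑ x1, M (x1, x2) * v x1 := by
      intro x2
      rw [Finset.mul_sum]
      exact Finset.sum_congr rfl fun x1 _ => by ring
    rw [Finset.sum_congr rfl fun x2 _ => e3 x2]
    simp only [hM1, mul_zero, Finset.sum_const_zero]
  -- main expansion
  have hmain : qf Bt L = qf B l1 + qf B l2 + qf Bt M := by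
    have expand : ∀ t : Y × Y, (Bt.mulVec L t) ^ 2
        = (a t.1) ^ 2 * (u0 t.2) ^ 2 + (u0 t.1) ^ 2 * (b t.2) ^ 2 + (D t) ^ 2
          + 2 * ((a t.1 * u0 t.1) * (u0 t.2 * b t.2))
          + 2 * (a t.1 * (u0 t.2 * D t)) + 2 * (u0 t.1 * (b t.2 * D t)) := by
      intro t; rw [hsplit t]; ring
    rw [qf, Finset.sum_congr rfl fun t _ => expand t]
    rw [Finset.sum_add_distrib, Finset.sum_add_distrib, Finset.sum_add_distrib,
      Finset.sum_add_distrib, Finset.sum_add_distrib]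
    rw [← Finset.mul_sum, ← Finset.mul_sum, ← Finset.mul_sum]
    have T1 : ∑ t : Y × Y, (a t.1) ^ 2 * (u0 t.2) ^ 2 = qf B l1 := by
      rw [sum_prod_mul (fun y => (a y) ^ 2) (fun y => (u0 y) ^ 2), hu0, mul_one, hqa]
    have T2 : ∑ t : Y × Y, (u0 t.1) ^ 2 * (b t.2) ^ 2 = qf B l2 := by
      rw [sum_prod_mul (fun y => (u0 y) ^ 2) (fun y => (b y) ^ 2), hu0, one_mul, hqb]
    have T4 : ∑ t : Y × Y, (a t.1 * u0 t.1) * (u0 t.2 * b t.2) = 0 := by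
      rw [sum_prod_mul (fun y => a y * u0 y) (fun y => u0 y * b y), hau, zero_mul]
    have T5 : ∑ t : Y × Y, a t.1 * (u0 t.2 * D t) = 0 := by
      rw [Fintype.sum_prod_type]
      have e : ∀ y1, ∑ y2, a y1 * (u0 y2 * D (y1, y2))
          = a y1 * ∑ y2, u0 y2 * D (y1, y2) := fun y1 => by rw [Finset.mul_sum]
      rw [Finset.sum_congr rfl fun y1 _ => e y1]
      simp only [hDau, mul_zero, Finset.sum_const_zero]
    have T6 : ∑ t : Y × Y, u0 t.1 * (b t.2 * D t) = 0 := by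
      rw [Fintype.sum_prod_type, Finset.sum_comm]
      have e : ∀ y2, ∑ y1, u0 y1 * (b y2 * D (y1, y2))
          = b y2 * ∑ y1, u0 y1 * D (y1, y2) := by
        intro y2
        rw [Finset.mul_sum]
        exact Finset.sum_congr rfl fun y1 _ => by ring
      rw [Finset.sum_congr rfl fun y2 _ => e y2]
      simp only [hDbu, mul_zero, Finset.sum_const_zero]
    rw [T1, T2, T4, T5, T6, ← hqD]
    ring
  -- bounding the doubly-orthogonal part columnwise
  have hcolbound : qf Bt M ≤ ∑ x2, qf B (fun x1 => M (x1, x2)) := by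
    have hDcol : ∀ y1 y2, D (y1, y2)
        = B.mulVec (fun s2 => B.mulVec (fun s1 => M (s1, s2)) y1) y2 := by
      intro y1 y2
      rw [hD (y1, y2)]
      simp only [Matrix.mulVec, dotProduct]
      rw [Fintype.sum_prod_type, Finset.sum_comm]
      refine Finset.sum_congr rfl fun x2 _ => ?_
      rw [Finset.mul_sum]
      exact Finset.sum_congr rfl fun x1 _ => by ring
    rw [hqD, Fintype.sum_prod_type]
    have hrow : ∀ y1, ∑ y2, (D (y1, y2)) ^ 2
        ≤ ∑ x2, (B.mulVec (fun x1 => M (x1, x2)) y1) ^ 2 := by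
      intro y1
      have e : ∑ y2, (D (y1, y2)) ^ 2
          = qf B (fun s2 => B.mulVec (fun s1 => M (s1, s2)) y1) := by
        rw [qf]
        exact Finset.sum_congr rfl fun y2 _ => by rw [hDcol y1 y2]
      rw [e]
      exact hcontract _
    calc ∑ y1, ∑ y2, (D (y1, y2)) ^ 2
        ≤ ∑ y1, ∑ x2, (B.mulVec (fun x1 => M (x1, x2)) y1) ^ 2 :=
          Finset.sum_le_sum fun y1 _ => hrow y1
    _ = ∑ x2, ∑ y1, (B.mulVec (fun x1 => M (x1, x2)) y1) ^ 2 := by rw [Finset.sum_comm]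
    _ = ∑ x2, qf B (fun x1 => M (x1, x2)) := rfl
  linarith


end Stmt18Aux

open Stmt18Aux

/-- Single-letter optimality for the 2-receiver common-message linear information
coupling problem: the 2-letter value
`sup { min(‖B₁⊗²L‖², ‖B₂⊗²L‖²) : ‖L‖ = 1, L ⊥ v₀ ⊗ v₀ }`
equals the single-letter value
`sup { min(‖B₁ℓ‖², ‖B₂ℓ‖²) : ‖ℓ‖ = 1, ℓ ⊥ v₀ }`, where `v₀ = √p`. -/
theorem stmt_18 {X Y1 Y2 : Type*} [Fintype X] [Fintype Y1] [Fintype Y2]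
    (W1 : Matrix Y1 X ℝ) (W2 : Matrix Y2 X ℝ) (p : X → ℝ) (q1 : Y1 → ℝ) (q2 : Y2 → ℝ)
    (hW10 : ∀ y x, 0 ≤ W1 y x) (hW11 : ∀ x, ∑ y, W1 y x = 1)
    (hW20 : ∀ y x, 0 ≤ W2 y x) (hW21 : ∀ x, ∑ y, W2 y x = 1)
    (hp : ∀ x, 0 < p x) (hpsum : ∑ x, p x = 1)
    (hq1 : q1 = W1.mulVec p) (hq1pos : ∀ y, 0 < q1 y)
    (hq2 : q2 = W2.mulVec p) (hq2pos : ∀ y, 0 < q2 y)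
    (B1 : Matrix Y1 X ℝ) (B2 : Matrix Y2 X ℝ)
    (hB1 : B1 = fun y x => W1 y x * Real.sqrt (p x) / Real.sqrt (q1 y))
    (hB2 : B2 = fun y x => W2 y x * Real.sqrt (p x) / Real.sqrt (q2 y))
    (B1t : Matrix (Y1 × Y1) (X × X) ℝ) (B2t : Matrix (Y2 × Y2) (X × X) ℝ)
    (hB1t : B1t = fun r s => B1 r.1 s.1 * B1 r.2 s.2)
    (hB2t : B2t = fun r s => B2 r.1 s.1 * B2 r.2 s.2) :
    sSup {r : ℝ | ∃ L : X × X → ℝ, (∑ s, (L s) ^ 2 = 1) ∧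
        (∑ s : X × X, L s * (Real.sqrt (p s.1) * Real.sqrt (p s.2))) = 0 ∧
        r = min (∑ t, (B1t.mulVec L t) ^ 2) (∑ t, (B2t.mulVec L t) ^ 2)} =
    sSup {r : ℝ | ∃ l : X → ℝ, (∑ x, (l x) ^ 2 = 1) ∧
        (∑ x, l x * Real.sqrt (p x)) = 0 ∧
        r = min (∑ y, (B1.mulVec l y) ^ 2) (∑ y, (B2.mulVec l y) ^ 2)} := by
  classical
  have hp0 : ∀ x, 0 ≤ p x := fun x => (hp x).le
  have hq1' : ∀ y, q1 y = ∑ x, W1 y x * p x := fun y => by rw [hq1]; rfl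
  have hq2' : ∀ y, q2 y = ∑ x, W2 y x * p x := fun y => by rw [hq2]; rfl
  have hB1' : ∀ y x, B1 y x = W1 y x * Real.sqrt (p x) / Real.sqrt (q1 y) := fun y x => by
    rw [hB1]
  have hB2' : ∀ y x, B2 y x = W2 y x * Real.sqrt (p x) / Real.sqrt (q2 y) := fun y x => by
    rw [hB2]
  have hB1t' : ∀ r s, B1t r s = B1 r.1 s.1 * B1 r.2 s.2 := fun r s => by rw [hB1t]
  have hB2t' : ∀ r s, B2t r s = B2 r.1 s.1 * B2 r.2 s.2 := fun r s => by rw [hB2t]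
  have hvsum : ∑ x, (Real.sqrt (p x)) ^ 2 = 1 := by
    rw [Finset.sum_congr rfl fun x _ => Real.sq_sqrt (hp0 x)]; exact hpsum
  -- single-letter channel facts
  have hBv1 : ∀ y, B1.mulVec (fun x => Real.sqrt (p x)) y = Real.sqrt (q1 y) :=
    B_mulVec_sqrtp W1 p q1 hp0 hq1' hq1pos B1 hB1'
  have hBv2 : ∀ y, B2.mulVec (fun x => Real.sqrt (p x)) y = Real.sqrt (q2 y) :=
    B_mulVec_sqrtp W2 p q2 hp0 hq2' hq2pos B2 hB2'
  have hBtq1 : ∀ x, ∑ y, B1 y x * Real.sqrt (q1 y) = Real.sqrt (p x) :=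
    B_transpose_sqrtq W1 p q1 hW11 hq1pos B1 hB1'
  have hBtq2 : ∀ x, ∑ y, B2 y x * Real.sqrt (q2 y) = Real.sqrt (p x) :=
    B_transpose_sqrtq W2 p q2 hW21 hq2pos B2 hB2'
  have hsumq1 : ∑ y, (Real.sqrt (q1 y)) ^ 2 = 1 := by
    rw [Finset.sum_congr rfl fun y _ => Real.sq_sqrt (hq1pos y).le]
    exact sum_q_eq_one W1 p q1 hW11 hpsum hq1'
  have hsumq2 : ∑ y, (Real.sqrt (q2 y)) ^ 2 = 1 := by
    rw [Finset.sum_congr rfl fun y _ => Real.sq_sqrt (hq2pos y).le]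
    exact sum_q_eq_one W2 p q2 hW21 hpsum hq2'
  have hcon1 : ∀ g : X → ℝ, qf B1 g ≤ ∑ x, (g x) ^ 2 :=
    channel_contract W1 p q1 hW10 hW11 hp0 hq1' hq1pos B1 hB1'
  have hcon2 : ∀ g : X → ℝ, qf B2 g ≤ ∑ x, (g x) ^ 2 :=
    channel_contract W2 p q2 hW20 hW21 hp0 hq2' hq2pos B2 hB2'
  -- tensor-channel contraction
  have hconT1 : ∀ G : X × X → ℝ, qf B1t G ≤ ∑ s, (G s) ^ 2 := by
    refine channel_contract (fun r s => W1 r.1 s.1 * W1 r.2 s.2) (fun s => p s.1 * p s.2)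
      (fun r => q1 r.1 * q1 r.2) (fun r s => mul_nonneg (hW10 _ _) (hW10 _ _)) ?_
      (fun s => mul_nonneg (hp0 _) (hp0 _)) ?_ (fun r => mul_pos (hq1pos _) (hq1pos _)) B1t ?_
    · intro s
      rw [sum_prod_mul (fun y => W1 y s.1) (fun y => W1 y s.2), hW11, hW11, mul_one]
    · intro r
      have e : ∑ s : X × X, (W1 r.1 s.1 * W1 r.2 s.2) * (p s.1 * p s.2)
          = (∑ x, W1 r.1 x * p x) * (∑ x, W1 r.2 x * p x) := by
        rw [← sum_prod_mul (fun x => W1 r.1 x * p x) (fun x => W1 r.2 x * p x)]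
        exact Finset.sum_congr rfl fun s _ => by ring
      rw [e, ← hq1' r.1, ← hq1' r.2]
    · intro r s
      rw [hB1t' r s, hB1' r.1 s.1, hB1' r.2 s.2,
        Real.sqrt_mul (hp0 s.1), Real.sqrt_mul (hq1pos r.1).le]
      ring
  have hconT2 : ∀ G : X × X → ℝ, qf B2t G ≤ ∑ s, (G s) ^ 2 := by
    refine channel_contract (fun r s => W2 r.1 s.1 * W2 r.2 s.2) (fun s => p s.1 * p s.2)
      (fun r => q2 r.1 * q2 r.2) (fun r s => mul_nonneg (hW20 _ _) (hW20 _ _)) ?_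
      (fun s => mul_nonneg (hp0 _) (hp0 _)) ?_ (fun r => mul_pos (hq2pos _) (hq2pos _)) B2t ?_
    · intro s
      rw [sum_prod_mul (fun y => W2 y s.1) (fun y => W2 y s.2), hW21, hW21, mul_one]
    · intro r
      have e : ∑ s : X × X, (W2 r.1 s.1 * W2 r.2 s.2) * (p s.1 * p s.2)
          = (∑ x, W2 r.1 x * p x) * (∑ x, W2 r.2 x * p x) := by
        rw [← sum_prod_mul (fun x => W2 r.1 x * p x) (fun x => W2 r.2 x * p x)]
        exact Finset.sum_congr rfl fun s _ => by ring
      rw [e, ← hq2' r.1, ← hq2' r.2]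
    · intro r s
      rw [hB2t' r s, hB2' r.1 s.1, hB2' r.2 s.2,
        Real.sqrt_mul (hp0 s.1), Real.sqrt_mul (hq2pos r.1).le]
      ring
  -- name the two sets
  set SS2 := {r : ℝ | ∃ L : X × X → ℝ, (∑ s, (L s) ^ 2 = 1) ∧
        (∑ s : X × X, L s * (Real.sqrt (p s.1) * Real.sqrt (p s.2))) = 0 ∧
        r = min (∑ t, (B1t.mulVec L t) ^ 2) (∑ t, (B2t.mulVec L t) ^ 2)} with hS2d
  set SS1 := {r : ℝ | ∃ l : X → ℝ, (∑ x, (l x) ^ 2 = 1) ∧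
        (∑ x, l x * Real.sqrt (p x)) = 0 ∧
        r = min (∑ y, (B1.mulVec l y) ^ 2) (∑ y, (B2.mulVec l y) ^ 2)} with hS1d
  -- upper bounds
  have hub1 : ∀ r ∈ SS1, r ≤ 1 := by
    rintro r ⟨l, hl1, -, rfl⟩
    calc min (∑ y, (B1.mulVec l y) ^ 2) (∑ y, (B2.mulVec l y) ^ 2)
        ≤ ∑ y, (B1.mulVec l y) ^ 2 := min_le_left _ _
    _ = qf B1 l := rfl
    _ ≤ ∑ x, (l x) ^ 2 := hcon1 l
    _ = 1 := hl1
  have hub2 : ∀ r ∈ SS2, r ≤ 1 := by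
    rintro r ⟨L, hL1, -, rfl⟩
    calc min (∑ t, (B1t.mulVec L t) ^ 2) (∑ t, (B2t.mulVec L t) ^ 2)
        ≤ ∑ t, (B1t.mulVec L t) ^ 2 := min_le_left _ _
    _ = qf B1t L := rfl
    _ ≤ ∑ s, (L s) ^ 2 := hconT1 L
    _ = 1 := hL1
  have hnn2 : ∀ r ∈ SS2, 0 ≤ r := by
    rintro r ⟨L, -, -, rfl⟩
    exact le_min (Finset.sum_nonneg fun t _ => sq_nonneg _)
      (Finset.sum_nonneg fun t _ => sq_nonneg _)
  -- embedding : single-letter values are 2-letter values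
  have hembed : ∀ r ∈ SS1, r ∈ SS2 := by
    rintro r ⟨l, hl1, hl2, rfl⟩
    refine ⟨fun s => l s.1 * Real.sqrt (p s.2), ?_, ?_, ?_⟩
    · have e : ∀ s : X × X, (l s.1 * Real.sqrt (p s.2)) ^ 2
          = (l s.1) ^ 2 * (Real.sqrt (p s.2)) ^ 2 := fun s => by ring
      rw [Finset.sum_congr rfl fun s _ => e s,
        sum_prod_mul (fun x => (l x) ^ 2) (fun x => (Real.sqrt (p x)) ^ 2), hl1, hvsum, mul_one]
    · have e : ∀ s : X × X, (l s.1 * Real.sqrt (p s.2)) * (Real.sqrt (p s.1) * Real.sqrt (p s.2))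
          = (l s.1 * Real.sqrt (p s.1)) * (Real.sqrt (p s.2) * Real.sqrt (p s.2)) :=
        fun s => by ring
      rw [Finset.sum_congr rfl fun s _ => e s,
        sum_prod_mul (fun x => l x * Real.sqrt (p x))
          (fun x => Real.sqrt (p x) * Real.sqrt (p x)), hl2, zero_mul]
    · have hA1 : ∀ t : Y1 × Y1, B1t.mulVec (fun s => l s.1 * Real.sqrt (p s.2)) t
          = B1.mulVec l t.1 * Real.sqrt (q1 t.2) := by
        rintro ⟨y1, y2⟩
        calc B1t.mulVec (fun s => l s.1 * Real.sqrt (p s.2)) (y1, y2)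
            = ∑ s : X × X, (B1 y1 s.1 * l s.1) * (B1 y2 s.2 * Real.sqrt (p s.2)) := by
              simp only [Matrix.mulVec, dotProduct]
              exact Finset.sum_congr rfl fun s _ => by rw [hB1t' (y1, y2) s]; ring
        _ = (∑ x, B1 y1 x * l x) * (∑ x, B1 y2 x * Real.sqrt (p x)) :=
              sum_prod_mul (fun x => B1 y1 x * l x) (fun x => B1 y2 x * Real.sqrt (p x))
        _ = B1.mulVec l y1 * B1.mulVec (fun x => Real.sqrt (p x)) y2 := rfl
        _ = B1.mulVec l y1 * Real.sqrt (q1 y2) := by rw [hBv1 y2]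
      have hA2 : ∀ t : Y2 × Y2, B2t.mulVec (fun s => l s.1 * Real.sqrt (p s.2)) t
          = B2.mulVec l t.1 * Real.sqrt (q2 t.2) := by
        rintro ⟨y1, y2⟩
        calc B2t.mulVec (fun s => l s.1 * Real.sqrt (p s.2)) (y1, y2)
            = ∑ s : X × X, (B2 y1 s.1 * l s.1) * (B2 y2 s.2 * Real.sqrt (p s.2)) := by
              simp only [Matrix.mulVec, dotProduct]
              exact Finset.sum_congr rfl fun s _ => by rw [hB2t' (y1, y2) s]; ring
        _ = (∑ x, B2 y1 x * l x) * (∑ x, B2 y2 x * Real.sqrt (p x)) :=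
              sum_prod_mul (fun x => B2 y1 x * l x) (fun x => B2 y2 x * Real.sqrt (p x))
        _ = B2.mulVec l y1 * B2.mulVec (fun x => Real.sqrt (p x)) y2 := rfl
        _ = B2.mulVec l y1 * Real.sqrt (q2 y2) := by rw [hBv2 y2]
      have hQ1 : ∑ t, (B1t.mulVec (fun s => l s.1 * Real.sqrt (p s.2)) t) ^ 2
          = ∑ y, (B1.mulVec l y) ^ 2 := by
        rw [Finset.sum_congr rfl fun t _ => by rw [hA1 t]]
        have e : ∀ t : Y1 × Y1, (B1.mulVec l t.1 * Real.sqrt (q1 t.2)) ^ 2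
            = (B1.mulVec l t.1) ^ 2 * (Real.sqrt (q1 t.2)) ^ 2 := fun t => by ring
        rw [Finset.sum_congr rfl fun t _ => e t,
          sum_prod_mul (fun y => (B1.mulVec l y) ^ 2) (fun y => (Real.sqrt (q1 y)) ^ 2),
          hsumq1, mul_one]
      have hQ2 : ∑ t, (B2t.mulVec (fun s => l s.1 * Real.sqrt (p s.2)) t) ^ 2
          = ∑ y, (B2.mulVec l y) ^ 2 := by
        rw [Finset.sum_congr rfl fun t _ => by rw [hA2 t]]
        have e : ∀ t : Y2 × Y2, (B2.mulVec l t.1 * Real.sqrt (q2 t.2)) ^ 2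
            = (B2.mulVec l t.1) ^ 2 * (Real.sqrt (q2 t.2)) ^ 2 := fun t => by ring
        rw [Finset.sum_congr rfl fun t _ => e t,
          sum_prod_mul (fun y => (B2.mulVec l y) ^ 2) (fun y => (Real.sqrt (q2 y)) ^ 2),
          hsumq2, mul_one]
      rw [hQ1, hQ2]
  -- the key single-letterization bound
  have hkey : ∀ r ∈ SS2, ∃ r' ∈ SS1, r ≤ r' := by
    rintro r ⟨L, hL1, hL0, rfl⟩
    set l1 : X → ℝ := fun x1 => ∑ x2, L (x1, x2) * Real.sqrt (p x2) with hl1d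
    set l2 : X → ℝ := fun x2 => ∑ x1, L (x1, x2) * Real.sqrt (p x1) with hl2d
    set M : X × X → ℝ :=
      fun s => L s - l1 s.1 * Real.sqrt (p s.2) - Real.sqrt (p s.1) * l2 s.2 with hMd
    have hl1e : ∀ x1, l1 x1 = ∑ x2, L (x1, x2) * Real.sqrt (p x2) := fun _ => rfl
    have hl2e : ∀ x2, l2 x2 = ∑ x1, L (x1, x2) * Real.sqrt (p x1) := fun _ => rfl
    have hMe : ∀ s : X × X,
        M s = L s - l1 s.1 * Real.sqrt (p s.2) - Real.sqrt (p s.1) * l2 s.2 := fun _ => rfl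
    have hps : ∑ s : X × X, L s * (Real.sqrt (p s.1) * Real.sqrt (p s.2))
        = ∑ x1, ∑ x2, L (x1, x2) * (Real.sqrt (p x1) * Real.sqrt (p x2)) := by
      rw [Fintype.sum_prod_type]
    have horth1 : ∑ x, l1 x * Real.sqrt (p x) = 0 := by
      calc ∑ x, l1 x * Real.sqrt (p x)
          = ∑ x1, ∑ x2, L (x1, x2) * (Real.sqrt (p x1) * Real.sqrt (p x2)) := by
            refine Finset.sum_congr rfl fun x1 _ => ?_
            rw [hl1e x1, Finset.sum_mul]
            exact Finset.sum_congr rfl fun x2 _ => by ring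
      _ = 0 := by rw [← hps]; exact hL0
    have horth2 : ∑ x, l2 x * Real.sqrt (p x) = 0 := by
      calc ∑ x, l2 x * Real.sqrt (p x)
          = ∑ x2, ∑ x1, L (x1, x2) * (Real.sqrt (p x1) * Real.sqrt (p x2)) := by
            refine Finset.sum_congr rfl fun x2 _ => ?_
            rw [hl2e x2, Finset.sum_mul]
            exact Finset.sum_congr rfl fun x1 _ => by ring
      _ = ∑ x1, ∑ x2, L (x1, x2) * (Real.sqrt (p x1) * Real.sqrt (p x2)) := Finset.sum_comm
      _ = 0 := by rw [← hps]; exact hL0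
    have hM2 : ∀ x1, ∑ x2, M (x1, x2) * Real.sqrt (p x2) = 0 := by
      intro x1
      have e : ∀ x2, M (x1, x2) * Real.sqrt (p x2)
          = L (x1, x2) * Real.sqrt (p x2) - l1 x1 * (Real.sqrt (p x2)) ^ 2
            - Real.sqrt (p x1) * (l2 x2 * Real.sqrt (p x2)) := by
        intro x2; rw [hMe (x1, x2)]; ring
      rw [Finset.sum_congr rfl fun x2 _ => e x2, Finset.sum_sub_distrib,
        Finset.sum_sub_distrib, ← Finset.mul_sum, ← Finset.mul_sum, ← hl1e x1, hvsum, horth2]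
      ring
    have hM1 : ∀ x2, ∑ x1, M (x1, x2) * Real.sqrt (p x1) = 0 := by
      intro x2
      have e : ∀ x1, M (x1, x2) * Real.sqrt (p x1)
          = L (x1, x2) * Real.sqrt (p x1) - Real.sqrt (p x2) * (l1 x1 * Real.sqrt (p x1))
            - l2 x2 * (Real.sqrt (p x1)) ^ 2 := by
        intro x1; rw [hMe (x1, x2)]; ring
      rw [Finset.sum_congr rfl fun x1 _ => e x1, Finset.sum_sub_distrib,
        Finset.sum_sub_distrib, ← Finset.mul_sum, ← Finset.mul_sum, ← hl2e x2, hvsum, horth1]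
      ring
    have hMsplit : ∀ s : X × X,
        L s = M s + l1 s.1 * Real.sqrt (p s.2) + Real.sqrt (p s.1) * l2 s.2 := by
      intro s; rw [hMe s]; ring
    -- norm splitting
    have hSLl1 : ∑ s : X × X, L s * (l1 s.1 * Real.sqrt (p s.2)) = ∑ x, (l1 x) ^ 2 := by
      rw [show ∑ s : X × X, L s * (l1 s.1 * Real.sqrt (p s.2))
          = ∑ x1, ∑ x2, L (x1, x2) * (l1 x1 * Real.sqrt (p x2)) from by
        rw [Fintype.sum_prod_type]]
      refine Finset.sum_congr rfl fun x1 _ => ?_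
      have e : ∀ x2, L (x1, x2) * (l1 x1 * Real.sqrt (p x2))
          = l1 x1 * (L (x1, x2) * Real.sqrt (p x2)) := fun x2 => by ring
      rw [Finset.sum_congr rfl fun x2 _ => e x2, ← Finset.mul_sum, ← hl1e x1, ← pow_two]
    have hSLl2 : ∑ s : X × X, L s * (Real.sqrt (p s.1) * l2 s.2) = ∑ x, (l2 x) ^ 2 := by
      rw [show ∑ s : X × X, L s * (Real.sqrt (p s.1) * l2 s.2)
          = ∑ x1, ∑ x2, L (x1, x2) * (Real.sqrt (p x1) * l2 x2) from by
        rw [Fintype.sum_prod_type], Finset.sum_comm]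
      refine Finset.sum_congr rfl fun x2 _ => ?_
      have e : ∀ x1, L (x1, x2) * (Real.sqrt (p x1) * l2 x2)
          = l2 x2 * (L (x1, x2) * Real.sqrt (p x1)) := fun x1 => by ring
      rw [Finset.sum_congr rfl fun x1 _ => e x1, ← Finset.mul_sum, ← hl2e x2, ← pow_two]
    have hSq1 : ∑ s : X × X, (l1 s.1 * Real.sqrt (p s.2)) ^ 2 = ∑ x, (l1 x) ^ 2 := by
      have e : ∀ s : X × X, (l1 s.1 * Real.sqrt (p s.2)) ^ 2
          = (l1 s.1) ^ 2 * (Real.sqrt (p s.2)) ^ 2 := fun s => by ring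
      rw [Finset.sum_congr rfl fun s _ => e s,
        sum_prod_mul (fun x => (l1 x) ^ 2) (fun x => (Real.sqrt (p x)) ^ 2), hvsum, mul_one]
    have hSq2 : ∑ s : X × X, (Real.sqrt (p s.1) * l2 s.2) ^ 2 = ∑ x, (l2 x) ^ 2 := by
      have e : ∀ s : X × X, (Real.sqrt (p s.1) * l2 s.2) ^ 2
          = (Real.sqrt (p s.1)) ^ 2 * (l2 s.2) ^ 2 := fun s => by ring
      rw [Finset.sum_congr rfl fun s _ => e s,
        sum_prod_mul (fun x => (Real.sqrt (p x)) ^ 2) (fun x => (l2 x) ^ 2), hvsum, one_mul]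
    have hScross : ∑ s : X × X,
        (l1 s.1 * Real.sqrt (p s.2)) * (Real.sqrt (p s.1) * l2 s.2) = 0 := by
      have e : ∀ s : X × X, (l1 s.1 * Real.sqrt (p s.2)) * (Real.sqrt (p s.1) * l2 s.2)
          = (l1 s.1 * Real.sqrt (p s.1)) * (l2 s.2 * Real.sqrt (p s.2)) := fun s => by ring
      rw [Finset.sum_congr rfl fun s _ => e s,
        sum_prod_mul (fun x => l1 x * Real.sqrt (p x)) (fun x => l2 x * Real.sqrt (p x)),
        horth1, zero_mul]
    have hMnorm : ∑ s : X × X, (M s) ^ 2 = 1 - (∑ x, (l1 x) ^ 2) - ∑ x, (l2 x) ^ 2 := by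
      have e : ∀ s : X × X, (M s) ^ 2
          = (L s) ^ 2 + (l1 s.1 * Real.sqrt (p s.2)) ^ 2 + (Real.sqrt (p s.1) * l2 s.2) ^ 2
            - 2 * (L s * (l1 s.1 * Real.sqrt (p s.2)))
            - 2 * (L s * (Real.sqrt (p s.1) * l2 s.2))
            + 2 * ((l1 s.1 * Real.sqrt (p s.2)) * (Real.sqrt (p s.1) * l2 s.2)) := by
        intro s; rw [hMe s]; ring
      rw [Finset.sum_congr rfl fun s _ => e s, Finset.sum_add_distrib,
        Finset.sum_sub_distrib, Finset.sum_sub_distrib, Finset.sum_add_distrib,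
        Finset.sum_add_distrib, ← Finset.mul_sum, ← Finset.mul_sum, ← Finset.mul_sum,
        hSLl1, hSLl2, hSq1, hSq2, hScross, hL1]
      ring
    -- decomposition bounds
    have hdec1 : qf B1t L ≤ qf B1 l1 + qf B1 l2 + ∑ x2, qf B1 (fun x1 => M (x1, x2)) :=
      decomp_bound B1 B1t hB1t' (fun x => Real.sqrt (p x)) (fun y => Real.sqrt (q1 y))
        hBv1 hBtq1 hsumq1 hcon1 L l1 l2 M hMsplit hM2 hM1 horth1 horth2
    have hdec2 : qf B2t L ≤ qf B2 l1 + qf B2 l2 + ∑ x2, qf B2 (fun x1 => M (x1, x2)) :=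
      decomp_bound B2 B2t hB2t' (fun x => Real.sqrt (p x)) (fun y => Real.sqrt (q2 y))
        hBv2 hBtq2 hsumq2 hcon2 L l1 l2 M hMsplit hM2 hM1 horth1 horth2
    -- merge the family {l1, l2, columns of M}
    set fam : (Unit ⊕ (Unit ⊕ X)) → X → ℝ :=
      Sum.elim (fun _ => l1) (Sum.elim (fun _ => l2) (fun x2 => fun x1 => M (x1, x2)))
      with hfamd
    have hfam_sum : ∀ F : (X → ℝ) → ℝ, ∑ k : Unit ⊕ (Unit ⊕ X), F (fam k)
        = F l1 + (F l2 + ∑ x2, F (fun x1 => M (x1, x2))) := by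
      intro F
      rw [Fintype.sum_sum_type, Fintype.sum_sum_type]
      have h1 : ∀ a : Unit, fam (Sum.inl a) = l1 := fun _ => rfl
      have h2 : ∀ a : Unit, fam (Sum.inr (Sum.inl a)) = l2 := fun _ => rfl
      have h3 : ∀ x2 : X, fam (Sum.inr (Sum.inr x2)) = fun x1 => M (x1, x2) := fun _ => rfl
      have e1 : ∑ a : Unit, F (fam (Sum.inl a)) = F l1 := by
        calc ∑ a : Unit, F (fam (Sum.inl a)) = ∑ _a : Unit, F l1 :=
              Finset.sum_congr rfl fun a _ => by rw [h1 a]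
        _ = F l1 := by simp
      have e2 : ∑ a : Unit, F (fam (Sum.inr (Sum.inl a))) = F l2 := by
        calc ∑ a : Unit, F (fam (Sum.inr (Sum.inl a))) = ∑ _a : Unit, F l2 :=
              Finset.sum_congr rfl fun a _ => by rw [h2 a]
        _ = F l2 := by simp
      have e3 : ∑ x2 : X, F (fam (Sum.inr (Sum.inr x2))) = ∑ x2 : X, F (fun x1 => M (x1, x2)) :=
        Finset.sum_congr rfl fun x2 _ => by rw [h3 x2]
      rw [e1, e2, e3]
    have hswap : ∑ x2, ∑ x1, (M (x1, x2)) ^ 2 = ∑ s : X × X, (M s) ^ 2 := by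
      rw [show ∑ s : X × X, (M s) ^ 2 = ∑ x1, ∑ x2, (M (x1, x2)) ^ 2 from by
        rw [Fintype.sum_prod_type], Finset.sum_comm]
    have htot : ∑ k : Unit ⊕ (Unit ⊕ X), ∑ x, (fam k x) ^ 2 = 1 := by
      rw [hfam_sum (fun u => ∑ x, (u x) ^ 2), hswap, hMnorm]
      ring
    have horthfam : ∀ k ∈ (Finset.univ : Finset (Unit ⊕ (Unit ⊕ X))),
        ∑ x, fam k x * Real.sqrt (p x) = 0 := by
      rintro (a | a | x2) -
      · exact horth1
      · exact horth2
      · exact hM1 x2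
    have hNfam : 0 < ∑ k : Unit ⊕ (Unit ⊕ X), ∑ x, (fam k x) ^ 2 := by
      rw [htot]; norm_num
    obtain ⟨z, hz1, hz2, hz3, hz4⟩ :=
      merge_fam B1 B2 (fun x => Real.sqrt (p x)) Finset.univ fam horthfam hNfam
    rw [htot, one_mul, hfam_sum (qf B1)] at hz3
    rw [htot, one_mul, hfam_sum (qf B2)] at hz4
    refine ⟨min (qf B1 z) (qf B2 z), ⟨z, hz1, hz2, rfl⟩, ?_⟩
    have h1 : (∑ t, (B1t.mulVec L t) ^ 2) ≤ qf B1 z := by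
      have : qf B1t L ≤ qf B1 z := by linarith
      exact this
    have h2 : (∑ t, (B2t.mulVec L t) ^ 2) ≤ qf B2 z := by
      have : qf B2t L ≤ qf B2 z := by linarith
      exact this
    exact min_le_min h1 h2
  -- conclude
  by_cases hS2e : SS2.Nonempty
  · obtain ⟨r0, hr0⟩ := hS2e
    obtain ⟨r0', hr0'1, hr0'2⟩ := hkey r0 hr0
    have h0le1 : 0 ≤ sSup SS1 :=
      le_trans (le_trans (hnn2 r0 hr0) hr0'2) (le_csSup ⟨1, fun r hr => hub1 r hr⟩ hr0'1)
    have h0le2 : 0 ≤ sSup SS2 :=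
      le_trans (hnn2 r0 hr0) (le_csSup ⟨1, fun r hr => hub2 r hr⟩ hr0)
    refine le_antisymm ?_ ?_
    · refine Real.sSup_le (fun r hr => ?_) h0le1
      obtain ⟨r', hr'1, hr'2⟩ := hkey r hr
      exact le_trans hr'2 (le_csSup ⟨1, fun s hs => hub1 s hs⟩ hr'1)
    · exact Real.sSup_le
        (fun r hr => le_csSup ⟨1, fun s hs => hub2 s hs⟩ (hembed r hr)) h0le2
  · have hS1e : ¬ SS1.Nonempty := fun ⟨r, hr⟩ => hS2e ⟨r, hembed r hr⟩
    rw [Set.not_nonempty_iff_eq_empty] at hS2e hS1e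
    rw [hS2e, hS1e]
end
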